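/- arXiv:0902.0316 — 7 statements merged into one kernel-verified Lean document; each statement's English description precedes it below -/
import Mathlib

section
/- Let s ≥ 1 be an integer, let 1 ≤ j ≤ s, and let e = (e_1,…,e_s) ∈ ℝ^s with e_i ≥ 0 for all i. Then the partial derivative of 𝔟_j with respect to the first coordinate e_1 is nonnegative at e, i.e. ∂𝔟_j/∂e_1(e) ≥ 0. (Equivalently: for e, e′ ∈ ℝ^s_{≥0} that agree in all coordinates except possibly the first, with e_1 ≥ e′_1, one has 𝔟_j(e) ≥ 𝔟_j(e′).) -/
/-- The rational function `𝔟ⱼ` on `ℝ^s` (only the coordinates `e 1, …, e s` are used):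
`𝔟ⱼ(e) = (∏_{1≤i≤s, i≠j} (i + e₁ + ⋯ + eᵢ)) /
  ((∏_{1≤i≤j−1} ((j−i) + e_{i+1} + ⋯ + e_j)) · (∏_{j+1≤i≤s} ((i−j) + e_{j+1} + ⋯ + e_i)))`. -/
noncomputable def bfrak (s j : ℕ) (e : ℕ → ℝ) : ℝ :=
  (∏ i ∈ (Finset.Icc 1 s).erase j, ((i : ℝ) + ∑ m ∈ Finset.Icc 1 i, e m)) /
    ((∏ i ∈ Finset.Icc 1 (j - 1), ((j : ℝ) - (i : ℝ) + ∑ m ∈ Finset.Icc (i + 1) j, e m)) *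
      ∏ i ∈ Finset.Icc (j + 1) s, ((i : ℝ) - (j : ℝ) + ∑ m ∈ Finset.Icc (j + 1) i, e m))

/-- The partial derivative of `𝔟ⱼ` with respect to the first coordinate `e₁` is
nonnegative at every point of `ℝ^s_{≥0}`. -/
theorem bfrak_lineDeriv_first_nonneg (s j : ℕ) (hs : 1 ≤ s) (hj : 1 ≤ j) (hjs : j ≤ s)
    (e : ℕ → ℝ) (he : ∀ i ∈ Finset.Icc 1 s, 0 ≤ e i) :
    0 ≤ lineDeriv ℝ (bfrak s j) e (Pi.single 1 1) := by
  set u : Finset ℕ := (Finset.Icc 1 s).erase j with hu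
  set c : ℕ → ℝ := fun i => (i : ℝ) + ∑ m ∈ Finset.Icc 1 i, e m with hc
  set D : ℝ :=
    (∏ i ∈ Finset.Icc 1 (j - 1), ((j : ℝ) - (i : ℝ) + ∑ m ∈ Finset.Icc (i + 1) j, e m)) *
      ∏ i ∈ Finset.Icc (j + 1) s, ((i : ℝ) - (j : ℝ) + ∑ m ∈ Finset.Icc (j + 1) i, e m)
    with hD
  have hcnn : ∀ i ∈ u, 0 ≤ c i := by
    intro i hi
    have hi' : i ∈ Finset.Icc 1 s := Finset.mem_of_mem_erase hi
    have h1 : (0:ℝ) ≤ (i:ℝ) := Nat.cast_nonneg i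
    have h2 : 0 ≤ ∑ m ∈ Finset.Icc 1 i, e m := by
      apply Finset.sum_nonneg
      intro m hm
      exact he m (Finset.mem_Icc.mpr ⟨(Finset.mem_Icc.mp hm).1,
        le_trans (Finset.mem_Icc.mp hm).2 (Finset.mem_Icc.mp hi').2⟩)
    simp only [hc]; linarith
  have hDnn : 0 ≤ D := by
    apply mul_nonneg
    · apply Finset.prod_nonneg
      intro i hi
      rw [Finset.mem_Icc] at hi
      have hij : i ≤ j := le_trans hi.2 (Nat.sub_le j 1)
      have : (i:ℝ) ≤ (j:ℝ) := Nat.cast_le.mpr hij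
      have hsum : 0 ≤ ∑ m ∈ Finset.Icc (i + 1) j, e m := by
        apply Finset.sum_nonneg
        intro m hm
        rw [Finset.mem_Icc] at hm
        exact he m (Finset.mem_Icc.mpr ⟨le_trans hi.1 (le_trans (Nat.le_succ i) hm.1),
          le_trans hm.2 hjs⟩)
      linarith
    · apply Finset.prod_nonneg
      intro i hi
      rw [Finset.mem_Icc] at hi
      have : (j:ℝ) ≤ (i:ℝ) := Nat.cast_le.mpr (le_trans (Nat.le_succ j) hi.1)
      have hsum : 0 ≤ ∑ m ∈ Finset.Icc (j + 1) i, e m := by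
        apply Finset.sum_nonneg
        intro m hm
        rw [Finset.mem_Icc] at hm
        exact he m (Finset.mem_Icc.mpr ⟨le_trans hj (le_trans (Nat.le_succ j) hm.1),
          le_trans hm.2 hi.2⟩)
      linarith
  -- the function along the line
  have key : ∀ t : ℝ, bfrak s j (e + t • (Pi.single 1 1 : ℕ → ℝ)) = (∏ i ∈ u, (c i + t)) / D := by
    intro t
    have hval : ∀ m : ℕ, (e + t • (Pi.single 1 1 : ℕ → ℝ)) m = e m + (if m = 1 then t else 0) := by
      intro m
      simp [Pi.single_apply, mul_ite]
    unfold bfrak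
    congr 1
    · apply Finset.prod_congr rfl
      intro i hi
      have hi' : i ∈ Finset.Icc 1 s := Finset.mem_of_mem_erase hi
      have h1i : 1 ≤ i := (Finset.mem_Icc.mp hi').1
      simp only [hval]
      rw [Finset.sum_add_distrib, Finset.sum_ite_eq' (Finset.Icc 1 i) 1 (fun _ => t)]
      rw [if_pos (Finset.mem_Icc.mpr ⟨le_refl 1, h1i⟩)]
      simp [hc, add_assoc]
    · rw [hD]
      congr 1
      · apply Finset.prod_congr rfl
        intro i hi
        rw [Finset.mem_Icc] at hi
        simp only [hval]
        rw [Finset.sum_add_distrib, Finset.sum_ite_eq' (Finset.Icc (i+1) j) 1 (fun _ => t)]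
        rw [if_neg, add_zero]
        rw [Finset.mem_Icc]
        rintro ⟨h1, -⟩
        omega
      · apply Finset.prod_congr rfl
        intro i hi
        simp only [hval]
        rw [Finset.sum_add_distrib, Finset.sum_ite_eq' (Finset.Icc (j+1) i) 1 (fun _ => t)]
        rw [if_neg, add_zero]
        rw [Finset.mem_Icc]
        rintro ⟨h1, -⟩
        omega
  rw [lineDeriv]
  have hfun : (fun t : ℝ => bfrak s j (e + t • (Pi.single 1 1 : ℕ → ℝ))) =
      fun t : ℝ => (∏ i ∈ u, (c i + t)) / D := funext key
  rw [hfun]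
  have hprod : HasDerivAt (fun t : ℝ => ∏ i ∈ u, (c i + t))
      (∑ i ∈ u, (∏ k ∈ u.erase i, (c k + (0:ℝ))) • (1:ℝ)) 0 := by
    apply HasDerivAt.fun_finsetProd
    intro i _
    simpa using (hasDerivAt_id (0:ℝ)).const_add (c i)
  have hdiv : HasDerivAt (fun t : ℝ => (∏ i ∈ u, (c i + t)) / D)
      ((∑ i ∈ u, (∏ k ∈ u.erase i, (c k + (0:ℝ))) • (1:ℝ)) / D) 0 := hprod.div_const D
  rw [hdiv.deriv]
  apply div_nonneg _ hDnn
  apply Finset.sum_nonneg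
  intro i hi
  rw [smul_eq_mul, mul_one]
  apply Finset.prod_nonneg
  intro k hk
  rw [add_zero]
  exact hcnn k (Finset.mem_of_mem_erase hk)
end

section
/- Let s ≥ 1 be an integer, let 1 ≤ j ≤ s and 1 ≤ k ≤ s be integers with k < j, and let e ∈ ℝ^s with all e_i ≥ 0. Then the directional derivative of 𝔟_j at e in the direction u_j − u_k is nonpositive, where u_i denotes the i-th standard basis vector of ℝ^s; that is, (∂/∂e_j − ∂/∂e_k)𝔟_j(e) ≤ 0. -/
/-- For `k < j`, the directional derivative of `𝔟ⱼ` in the direction `uⱼ − u_k`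
is nonpositive on `ℝ^s_{≥0}`. -/
theorem bfrak_lineDeriv_j_sub_k_nonpos (s j k : ℕ) (hs : 1 ≤ s)
    (hj : 1 ≤ j) (hjs : j ≤ s) (hk : 1 ≤ k) (hks : k ≤ s) (hkj : k < j)
    (e : ℕ → ℝ) (he : ∀ i ∈ Finset.Icc 1 s, 0 ≤ e i) :
    lineDeriv ℝ (bfrak s j) e (Pi.single j 1 - Pi.single k 1) ≤ 0 := by
  classical
  set v : ℕ → ℝ := Pi.single j 1 - Pi.single k 1 with hv
  have hvsum : ∀ S : Finset ℕ, ∑ m ∈ S, v m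
      = (if j ∈ S then (1:ℝ) else 0) - (if k ∈ S then (1:ℝ) else 0) := by
    intro S
    simp only [hv, Pi.sub_apply, Finset.sum_sub_distrib, Pi.single_apply]
    rw [Finset.sum_ite_eq' S j (fun _ => (1:ℝ)), Finset.sum_ite_eq' S k (fun _ => (1:ℝ))]
  have haff : ∀ (c : ℝ) (S : Finset ℕ),
      HasDerivAt (fun t : ℝ => c + ∑ m ∈ S, (e m + t * v m)) (∑ m ∈ S, v m) 0 := by
    intro c S
    apply HasDerivAt.const_add
    apply HasDerivAt.fun_sum
    intro m _
    simpa using ((hasDerivAt_id (0:ℝ)).mul_const (v m)).const_add (e m)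
  set A := (Finset.Icc 1 s).erase j with hA
  set N' : ℝ := ∑ i ∈ A, (∏ i' ∈ A.erase i, ((i':ℝ) + ∑ m ∈ Finset.Icc 1 i', e m)) *
      (∑ m ∈ Finset.Icc 1 i, v m) with hN'
  have hN : HasDerivAt (fun t : ℝ => ∏ i ∈ A, ((i:ℝ) + ∑ m ∈ Finset.Icc 1 i, (e m + t * v m)))
      N' 0 := by
    have := HasDerivAt.fun_finsetProd (x := (0:ℝ)) (u := A)
      (f := fun i t => (i:ℝ) + ∑ m ∈ Finset.Icc 1 i, (e m + t * v m))
      (f' := fun i => ∑ m ∈ Finset.Icc 1 i, v m)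
      (fun i _ => haff (i:ℝ) (Finset.Icc 1 i))
    simpa [smul_eq_mul, hN'] using this
  set P1' : ℝ := ∑ i ∈ Finset.Icc 1 (j-1),
      (∏ i' ∈ (Finset.Icc 1 (j-1)).erase i, ((j:ℝ) - (i':ℝ) + ∑ m ∈ Finset.Icc (i'+1) j, e m)) *
      (∑ m ∈ Finset.Icc (i+1) j, v m) with hP1'
  have hP1 : HasDerivAt (fun t : ℝ => ∏ i ∈ Finset.Icc 1 (j-1),
      ((j:ℝ) - (i:ℝ) + ∑ m ∈ Finset.Icc (i+1) j, (e m + t * v m))) P1' 0 := by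
    have := HasDerivAt.fun_finsetProd (x := (0:ℝ)) (u := Finset.Icc 1 (j-1))
      (f := fun i t => (j:ℝ) - (i:ℝ) + ∑ m ∈ Finset.Icc (i+1) j, (e m + t * v m))
      (f' := fun i => ∑ m ∈ Finset.Icc (i+1) j, v m)
      (fun i _ => haff ((j:ℝ) - (i:ℝ)) (Finset.Icc (i+1) j))
    simpa [smul_eq_mul, hP1'] using this
  set P2' : ℝ := ∑ i ∈ Finset.Icc (j+1) s,
      (∏ i' ∈ (Finset.Icc (j+1) s).erase i, ((i':ℝ) - (j:ℝ) + ∑ m ∈ Finset.Icc (j+1) i', e m)) *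
      (∑ m ∈ Finset.Icc (j+1) i, v m) with hP2'
  have hP2 : HasDerivAt (fun t : ℝ => ∏ i ∈ Finset.Icc (j+1) s,
      ((i:ℝ) - (j:ℝ) + ∑ m ∈ Finset.Icc (j+1) i, (e m + t * v m))) P2' 0 := by
    have := HasDerivAt.fun_finsetProd (x := (0:ℝ)) (u := Finset.Icc (j+1) s)
      (f := fun i t => (i:ℝ) - (j:ℝ) + ∑ m ∈ Finset.Icc (j+1) i, (e m + t * v m))
      (f' := fun i => ∑ m ∈ Finset.Icc (j+1) i, v m)
      (fun i _ => haff ((i:ℝ) - (j:ℝ)) (Finset.Icc (j+1) i))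
    simpa [smul_eq_mul, hP2'] using this
  -- values at 0
  set N0 : ℝ := ∏ i ∈ A, ((i:ℝ) + ∑ m ∈ Finset.Icc 1 i, e m) with hN0
  set P10 : ℝ := ∏ i ∈ Finset.Icc 1 (j-1), ((j:ℝ) - (i:ℝ) + ∑ m ∈ Finset.Icc (i+1) j, e m) with hP10
  set P20 : ℝ := ∏ i ∈ Finset.Icc (j+1) s, ((i:ℝ) - (j:ℝ) + ∑ m ∈ Finset.Icc (j+1) i, e m) with hP20
  -- positivity facts
  have hfac : ∀ i ∈ A, 0 ≤ (i:ℝ) + ∑ m ∈ Finset.Icc 1 i, e m := by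
    intro i hi
    have his : i ≤ s := (Finset.mem_Icc.mp (Finset.mem_of_mem_erase hi)).2
    have : 0 ≤ ∑ m ∈ Finset.Icc 1 i, e m :=
      Finset.sum_nonneg fun m hm => he m (Finset.mem_Icc.mp hm |> fun h => Finset.mem_Icc.mpr ⟨h.1, h.2.trans his⟩)
    positivity
  have hP1fac : ∀ i ∈ Finset.Icc 1 (j-1), 0 < (j:ℝ) - (i:ℝ) + ∑ m ∈ Finset.Icc (i+1) j, e m := by
    intro i hi
    obtain ⟨h1, h2⟩ := Finset.mem_Icc.mp hi
    have hij : i < j := by omega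
    have hsum : 0 ≤ ∑ m ∈ Finset.Icc (i+1) j, e m := by
      refine Finset.sum_nonneg fun m hm => he m ?_
      have := Finset.mem_Icc.mp hm
      exact Finset.mem_Icc.mpr ⟨by omega, this.2.trans hjs⟩
    have : (i:ℝ) < (j:ℝ) := by exact_mod_cast hij
    linarith
  have hP2fac : ∀ i ∈ Finset.Icc (j+1) s, 0 < (i:ℝ) - (j:ℝ) + ∑ m ∈ Finset.Icc (j+1) i, e m := by
    intro i hi
    obtain ⟨h1, h2⟩ := Finset.mem_Icc.mp hi
    have hsum : 0 ≤ ∑ m ∈ Finset.Icc (j+1) i, e m := by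
      refine Finset.sum_nonneg fun m hm => he m ?_
      have := Finset.mem_Icc.mp hm
      exact Finset.mem_Icc.mpr ⟨by omega, this.2.trans h2⟩
    have : (j:ℝ) < (i:ℝ) := by exact_mod_cast Nat.lt_of_succ_le h1
    linarith
  have hN0 : 0 ≤ N0 := Finset.prod_nonneg hfac
  have hP10pos : 0 < P10 := Finset.prod_pos hP1fac
  have hP20pos : 0 < P20 := Finset.prod_pos hP2fac
  have hD0pos : 0 < P10 * P20 := mul_pos hP10pos hP20pos
  -- coefficient signs
  have hcN : ∀ i, (∑ m ∈ Finset.Icc 1 i, v m) ≤ 0 := by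
    intro i
    rw [hvsum]
    simp only [Finset.mem_Icc]
    split_ifs with h1 h2 h2
    · norm_num
    · exact absurd ⟨hk, hkj.le.trans h1.2⟩ h2
    · norm_num
    · norm_num
  have hcP1 : ∀ i, 0 ≤ (∑ m ∈ Finset.Icc (i+1) j, v m) := by
    intro i
    rw [hvsum]
    simp only [Finset.mem_Icc]
    split_ifs with h1 h2 h2
    · norm_num
    · norm_num
    · exact absurd ⟨h2.1.trans hkj.le, le_refl j⟩ h1
    · norm_num
  have hcP2 : ∀ i, 0 ≤ (∑ m ∈ Finset.Icc (j+1) i, v m) := by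
    intro i
    rw [hvsum]
    simp only [Finset.mem_Icc]
    split_ifs with h1 h2 h2
    · exact absurd h1.1 (lt_irrefl j)
    · exact absurd h1.1 (lt_irrefl j)
    · exact absurd h2.1 (not_lt.mpr hkj.le)
    · norm_num
  have hN'le : N' ≤ 0 := by
    rw [hN']
    refine Finset.sum_nonpos fun i hi => mul_nonpos_of_nonneg_of_nonpos ?_ (hcN i)
    exact Finset.prod_nonneg fun i' hi' => hfac i' (Finset.mem_of_mem_erase hi')
  have hP1'ge : 0 ≤ P1' := by
    rw [hP1']
    refine Finset.sum_nonneg fun i hi => mul_nonneg ?_ (hcP1 i)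
    exact Finset.prod_nonneg fun i' hi' => le_of_lt (hP1fac i' (Finset.mem_of_mem_erase hi'))
  have hP2'ge : 0 ≤ P2' := by
    rw [hP2']
    refine Finset.sum_nonneg fun i hi => mul_nonneg ?_ (hcP2 i)
    exact Finset.prod_nonneg fun i' hi' => le_of_lt (hP2fac i' (Finset.mem_of_mem_erase hi'))
  -- assemble derivative of denominator and quotient
  have hD : HasDerivAt (fun t : ℝ =>
      (∏ i ∈ Finset.Icc 1 (j-1), ((j:ℝ) - (i:ℝ) + ∑ m ∈ Finset.Icc (i+1) j, (e m + t * v m))) *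
      ∏ i ∈ Finset.Icc (j+1) s, ((i:ℝ) - (j:ℝ) + ∑ m ∈ Finset.Icc (j+1) i, (e m + t * v m)))
      (P1' * P20 + P10 * P2') 0 := by
    have := hP1.fun_mul hP2
    simpa [hP10, hP20] using this
  have hD0ne : (P10 * P20) ≠ 0 := ne_of_gt hD0pos
  have hQ : HasDerivAt (fun t : ℝ =>
      (∏ i ∈ A, ((i:ℝ) + ∑ m ∈ Finset.Icc 1 i, (e m + t * v m))) /
      ((∏ i ∈ Finset.Icc 1 (j-1), ((j:ℝ) - (i:ℝ) + ∑ m ∈ Finset.Icc (i+1) j, (e m + t * v m))) *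
       ∏ i ∈ Finset.Icc (j+1) s, ((i:ℝ) - (j:ℝ) + ∑ m ∈ Finset.Icc (j+1) i, (e m + t * v m))))
      ((N' * (P10 * P20) - N0 * (P1' * P20 + P10 * P2')) / (P10 * P20)^2) 0 := by
    have := hN.fun_div hD (by simp only [zero_mul, add_zero]; exact hD0ne)
    simpa [hN0, hP10, hP20] using this
  have hfun : (fun t : ℝ => bfrak s j (e + t • v)) = (fun t : ℝ =>
      (∏ i ∈ A, ((i:ℝ) + ∑ m ∈ Finset.Icc 1 i, (e m + t * v m))) /
      ((∏ i ∈ Finset.Icc 1 (j-1), ((j:ℝ) - (i:ℝ) + ∑ m ∈ Finset.Icc (i+1) j, (e m + t * v m))) *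
       ∏ i ∈ Finset.Icc (j+1) s, ((i:ℝ) - (j:ℝ) + ∑ m ∈ Finset.Icc (j+1) i, (e m + t * v m)))) := by
    funext t
    simp [bfrak, hA, Pi.add_apply, Pi.smul_apply, smul_eq_mul]
  have : lineDeriv ℝ (bfrak s j) e v =
      (N' * (P10 * P20) - N0 * (P1' * P20 + P10 * P2')) / (P10 * P20)^2 := by
    rw [lineDeriv, hfun]
    exact hQ.deriv
  rw [this]
  apply div_nonpos_of_nonpos_of_nonneg
  · have h1 : N' * (P10 * P20) ≤ 0 := mul_nonpos_of_nonpos_of_nonneg hN'le (le_of_lt hD0pos)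
    have h2 : 0 ≤ N0 * (P1' * P20 + P10 * P2') := by
      apply mul_nonneg hN0
      have := mul_nonneg hP1'ge (le_of_lt hP20pos)
      have := mul_nonneg (le_of_lt hP10pos) hP2'ge
      linarith
    linarith
  · positivity
end

section
/- Let s ≥ 1 be an integer, let 1 ≤ j ≤ s and 1 ≤ k ≤ s be integers with k > j + 1, and let e ∈ ℝ^s with all e_i ≥ 0. Then the directional derivative of 𝔟_j at e in the direction u_{j+1} − u_k is nonpositive, where u_i denotes the i-th standard basis vector of ℝ^s; that is, (∂/∂e_{j+1} − ∂/∂e_k)𝔟_j(e) ≤ 0. -/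
/-- For `k > j + 1`, the directional derivative of `𝔟ⱼ` in the direction `u_{j+1} − u_k`
is nonpositive on `ℝ^s_{≥0}`. -/
theorem bfrak_lineDeriv_jsucc_sub_k_nonpos (s j k : ℕ) (hs : 1 ≤ s)
    (hj : 1 ≤ j) (hjs : j ≤ s) (hk : 1 ≤ k) (hks : k ≤ s) (hkj : j + 1 < k)
    (e : ℕ → ℝ) (he : ∀ i ∈ Finset.Icc 1 s, 0 ≤ e i) :
    lineDeriv ℝ (bfrak s j) e (Pi.single (j + 1) 1 - Pi.single k 1) ≤ 0 := by
  classical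
  set v : ℕ → ℝ := Pi.single (j + 1) 1 - Pi.single k 1 with hv
  set I : Finset ℕ := Finset.Icc (j + 1) (k - 1) with hIdef
  set A : ℕ → ℝ := fun i => (i : ℝ) + ∑ m ∈ Finset.Icc 1 i, e m with hAdef
  set B : ℕ → ℝ := fun i => (i : ℝ) - (j : ℝ) + ∑ m ∈ Finset.Icc (j + 1) i, e m with hBdef
  set C : ℝ := (∏ i ∈ (Finset.Icc 1 s).erase j \ I, A i) /
      ((∏ i ∈ Finset.Icc 1 (j - 1), ((j : ℝ) - (i : ℝ) + ∑ m ∈ Finset.Icc (i + 1) j, e m)) *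
        ∏ i ∈ Finset.Icc (j + 1) s \ I, B i) with hCdef
  have hsum : ∀ (a b : ℕ) (t : ℝ), (∑ m ∈ Finset.Icc a b, (e m + t * v m)) =
      (∑ m ∈ Finset.Icc a b, e m) +
        t * ((if j + 1 ∈ Finset.Icc a b then (1:ℝ) else 0) -
          (if k ∈ Finset.Icc a b then (1:ℝ) else 0)) := by
    intro a b t
    rw [Finset.sum_add_distrib, ← Finset.mul_sum]
    congr 2
    simp only [hv, Pi.sub_apply, Finset.sum_sub_distrib, Pi.single_apply]
    rw [Finset.sum_ite_eq' (Finset.Icc a b) (j + 1) (fun _ => (1:ℝ)),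
      Finset.sum_ite_eq' (Finset.Icc a b) k (fun _ => (1:ℝ))]
  have hIsubE : I ⊆ (Finset.Icc 1 s).erase j := by
    intro i hi
    simp only [hIdef, Finset.mem_Icc] at hi
    simp only [Finset.mem_erase, Finset.mem_Icc]
    omega
  have hIsubD : I ⊆ Finset.Icc (j + 1) s := by
    intro i hi
    simp only [hIdef, Finset.mem_Icc] at hi ⊢
    omega
  have key : ∀ t : ℝ, bfrak s j (e + t • v) =
      C * ∏ i ∈ I, ((A i + t) / (B i + t)) := by
    intro t
    unfold bfrak
    simp only [Pi.add_apply, Pi.smul_apply, smul_eq_mul]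
    have hnum : (∏ i ∈ (Finset.Icc 1 s).erase j,
        ((i : ℝ) + ∑ m ∈ Finset.Icc 1 i, (e m + t * v m))) =
        (∏ i ∈ (Finset.Icc 1 s).erase j \ I, A i) * ∏ i ∈ I, (A i + t) := by
      rw [← Finset.prod_sdiff hIsubE]
      congr 1
      · refine Finset.prod_congr rfl fun i hi => ?_
        simp only [Finset.mem_sdiff, Finset.mem_erase, Finset.mem_Icc, hIdef] at hi
        rw [hsum]
        simp only [Finset.mem_Icc, hAdef]
        by_cases h : j + 1 ≤ i
        · rw [if_pos ⟨by omega, h⟩, if_pos ⟨by omega, by omega⟩]; ring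
        · rw [if_neg (by omega), if_neg (by omega)]; ring
      · refine Finset.prod_congr rfl fun i hi => ?_
        simp only [hIdef, Finset.mem_Icc] at hi
        rw [hsum]
        simp only [Finset.mem_Icc, hAdef]
        rw [if_pos ⟨by omega, by omega⟩, if_neg (by omega)]; ring
    have hden1 : (∏ i ∈ Finset.Icc 1 (j - 1),
        ((j : ℝ) - (i : ℝ) + ∑ m ∈ Finset.Icc (i + 1) j, (e m + t * v m))) =
        ∏ i ∈ Finset.Icc 1 (j - 1),
          ((j : ℝ) - (i : ℝ) + ∑ m ∈ Finset.Icc (i + 1) j, e m) := by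
      refine Finset.prod_congr rfl fun i hi => ?_
      simp only [Finset.mem_Icc] at hi
      rw [hsum]
      rw [if_neg (by simp only [Finset.mem_Icc]; omega),
        if_neg (by simp only [Finset.mem_Icc]; omega)]
      ring
    have hden2 : (∏ i ∈ Finset.Icc (j + 1) s,
        ((i : ℝ) - (j : ℝ) + ∑ m ∈ Finset.Icc (j + 1) i, (e m + t * v m))) =
        (∏ i ∈ Finset.Icc (j + 1) s \ I, B i) * ∏ i ∈ I, (B i + t) := by
      rw [← Finset.prod_sdiff hIsubD]
      congr 1
      · refine Finset.prod_congr rfl fun i hi => ?_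
        simp only [Finset.mem_sdiff, Finset.mem_Icc, hIdef] at hi
        rw [hsum]
        simp only [Finset.mem_Icc, hBdef]
        rw [if_pos ⟨by omega, by omega⟩, if_pos ⟨by omega, by omega⟩]; ring
      · refine Finset.prod_congr rfl fun i hi => ?_
        simp only [hIdef, Finset.mem_Icc] at hi
        rw [hsum]
        simp only [Finset.mem_Icc, hBdef]
        rw [if_pos ⟨by omega, by omega⟩, if_neg (by omega)]; ring
    rw [hnum, hden1, hden2, hCdef, Finset.prod_div_distrib, div_mul_div_comm, mul_assoc]
  -- positivity facts
  have heI : ∀ a b : ℕ, 1 ≤ a → b ≤ s → (0:ℝ) ≤ ∑ m ∈ Finset.Icc a b, e m := by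
    intro a b ha hb
    refine Finset.sum_nonneg fun m hm => ?_
    simp only [Finset.mem_Icc] at hm
    exact he m (Finset.mem_Icc.mpr ⟨by omega, by omega⟩)
  have hA0 : ∀ i, i ≤ s → (0:ℝ) ≤ A i := by
    intro i hi
    have := heI 1 i le_rfl hi
    simp only [hAdef]
    positivity
  have hB0 : ∀ i ∈ I, (0:ℝ) < B i := by
    intro i hi
    simp only [hIdef, Finset.mem_Icc] at hi
    have h1 := heI (j + 1) i (by omega) (by omega)
    have h2 : (j:ℝ) + 1 ≤ (i:ℝ) := by exact_mod_cast Nat.cast_le.mpr (by omega : j + 1 ≤ i)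
    simp only [hBdef]
    push_cast at h2 ⊢
    linarith
  have hAB : ∀ i ∈ I, B i ≤ A i := by
    intro i hi
    simp only [hIdef, Finset.mem_Icc] at hi
    have hsplit : (∑ m ∈ Finset.Icc 1 j, e m) + ∑ m ∈ Finset.Icc (j + 1) i, e m =
        ∑ m ∈ Finset.Icc 1 i, e m := by
      have h1 : Finset.Icc 1 j = Finset.Ioc 0 j := by ext m; simp [Finset.mem_Icc, Finset.mem_Ioc]; omega
      have h2 : Finset.Icc (j + 1) i = Finset.Ioc j i := by
        ext m; simp [Finset.mem_Icc, Finset.mem_Ioc]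
      have h3 : Finset.Icc 1 i = Finset.Ioc 0 i := by ext m; simp [Finset.mem_Icc, Finset.mem_Ioc]; omega
      rw [h1, h2, h3]
      exact Finset.sum_Ioc_consecutive e (by omega) (by omega)
    have h4 := heI 1 j le_rfl (by omega)
    have h5 : (1:ℝ) ≤ (j:ℝ) := by exact_mod_cast hj
    simp only [hAdef, hBdef]
    linarith
  have hC0 : 0 ≤ C := by
    rw [hCdef]
    apply div_nonneg
    · refine Finset.prod_nonneg fun i hi => ?_
      simp only [Finset.mem_sdiff, Finset.mem_erase, Finset.mem_Icc] at hi
      exact hA0 i (by omega)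
    · apply mul_nonneg
      · refine Finset.prod_nonneg fun i hi => ?_
        simp only [Finset.mem_Icc] at hi
        have h1 := heI (i + 1) j (by omega) (by omega)
        have h2 : (i:ℝ) + 1 ≤ (j:ℝ) := by exact_mod_cast Nat.cast_le.mpr (by omega : i + 1 ≤ j)
        push_cast at h2 ⊢
        linarith
      · refine Finset.prod_nonneg fun i hi => ?_
        simp only [Finset.mem_sdiff, Finset.mem_Icc] at hi
        have h1 := heI (j + 1) i (by omega) (by omega)
        have h2 : (j:ℝ) + 1 ≤ (i:ℝ) := by exact_mod_cast Nat.cast_le.mpr (by omega : j + 1 ≤ i)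
        simp only [hBdef]
        push_cast at h2 ⊢
        linarith
  -- derivatives
  have hder : ∀ i ∈ I, HasDerivAt (fun t : ℝ => (A i + t) / (B i + t))
      ((B i - A i) / (B i) ^ 2) 0 := by
    intro i hi
    have hBne : B i + 0 ≠ 0 := by have := hB0 i hi; intro h; linarith
    have h1 : HasDerivAt (fun t : ℝ => A i + t) 1 0 := by
      simpa using (hasDerivAt_id (0:ℝ)).const_add (A i)
    have h2 : HasDerivAt (fun t : ℝ => B i + t) 1 0 := by
      simpa using (hasDerivAt_id (0:ℝ)).const_add (B i)
    have h3 := h1.div h2 hBne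
    refine h3.congr_deriv ?_
    rw [add_zero, add_zero]
    ring
  have hprod := HasDerivAt.fun_finsetProd (u := I)
    (f := fun i (t : ℝ) => (A i + t) / (B i + t))
    (f' := fun i => (B i - A i) / (B i) ^ 2) (x := 0) hder
  have hfull := hprod.const_mul C
  have hgoal : lineDeriv ℝ (bfrak s j) e v =
      deriv (fun t : ℝ => bfrak s j (e + t • v)) 0 := rfl
  rw [hgoal]
  have hfun : (fun t : ℝ => bfrak s j (e + t • v)) =
      fun t : ℝ => C * ∏ i ∈ I, ((A i + t) / (B i + t)) := funext key
  rw [hfun, hfull.deriv]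
  have hD0 : (∑ i ∈ I, (∏ l ∈ I.erase i, ((A l + 0) / (B l + 0))) •
      ((B i - A i) / (B i) ^ 2)) ≤ 0 := by
    refine Finset.sum_nonpos fun i hi => ?_
    rw [smul_eq_mul]
    apply mul_nonpos_of_nonneg_of_nonpos
    · refine Finset.prod_nonneg fun l hl => ?_
      have hlI : l ∈ I := Finset.mem_of_mem_erase hl
      have hls : l ≤ s := by
        have := hIsubD hlI
        simp only [Finset.mem_Icc] at this
        omega
      exact div_nonneg (by simpa using hA0 l hls) (by have := hB0 l hlI; linarith)
    · apply div_nonpos_of_nonpos_of_nonneg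
      · have := hAB i hi; linarith
      · positivity
  calc C * (∑ i ∈ I, (∏ l ∈ I.erase i, ((A l + 0) / (B l + 0))) •
        ((B i - A i) / (B i) ^ 2)) ≤ C * 0 := mul_le_mul_of_nonneg_left hD0 hC0
    _ = 0 := mul_zero C
end

section
/- Let s ≥ 1 be an integer and let e = (e_1,…,e_s) ∈ ℝ^s with e_i ≥ 0 for all i and with e_1 ≥ e_2 + e_3 + ⋯ + e_s. Then for every integer 1 ≤ j ≤ s, 𝔟_j(e) ≥ binom(s, j). -/
namespace BfrakAux

open Finset Nat

open scoped Classical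

/-- Prefix sum `e 1 + ⋯ + e i`. -/
noncomputable def Ep (e : ℕ → ℝ) (i : ℕ) : ℝ := ∑ m ∈ Finset.Icc 1 i, e m

/-- `|i - j|` as a natural number. -/
def cc (j i : ℕ) : ℕ := if i ≤ j then j - i else i - j

/-- `|Ep e i - Ep e j|` (for monotone prefix sums). -/
noncomputable def Sw (e : ℕ → ℝ) (j i : ℕ) : ℝ :=
  if i ≤ j then Ep e j - Ep e i else Ep e i - Ep e j

lemma Icc_one_eq_Ioc (i : ℕ) : Finset.Icc 1 i = Finset.Ioc 0 i := by
  rw [← Finset.Icc_add_one_left_eq_Ioc]; rfl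

lemma Ep_sub (e : ℕ → ℝ) {a b : ℕ} (hab : a ≤ b) :
    Ep e b - Ep e a = ∑ m ∈ Finset.Ioc a b, e m := by
  have h := Finset.sum_Ioc_consecutive e (Nat.zero_le a) hab
  rw [Ep, Ep, Icc_one_eq_Ioc, Icc_one_eq_Ioc, ← h]
  ring

section

variable {s j : ℕ} {e : ℕ → ℝ}

lemma sum_Ioc_nonneg (he : ∀ i ∈ Finset.Icc 1 s, 0 ≤ e i) {a b : ℕ} (hb : b ≤ s) :
    0 ≤ ∑ m ∈ Finset.Ioc a b, e m := by
  refine Finset.sum_nonneg fun m hm => he m ?_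
  rw [mem_Ioc] at hm
  rw [mem_Icc]
  omega

lemma Ep_diff_nonneg (he : ∀ i ∈ Finset.Icc 1 s, 0 ≤ e i) {a b : ℕ} (hab : a ≤ b)
    (hb : b ≤ s) : 0 ≤ Ep e b - Ep e a := by
  rw [Ep_sub e hab]
  exact sum_Ioc_nonneg he hb

lemma e1_le_Ep (he : ∀ i ∈ Finset.Icc 1 s, 0 ≤ e i) {i : ℕ} (h1 : 1 ≤ i) (his : i ≤ s) :
    e 1 ≤ Ep e i := by
  have h0 : Ep e 1 = e 1 := by simp [Ep]
  have := Ep_diff_nonneg he h1 his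
  linarith

lemma Ep_nonneg (he : ∀ i ∈ Finset.Icc 1 s, 0 ≤ e i) {i : ℕ} (his : i ≤ s) :
    0 ≤ Ep e i := by
  have h := Ep_diff_nonneg he (Nat.zero_le i) his
  have h0 : Ep e 0 = 0 := by simp [Ep]
  linarith

lemma diff_le_e1 (he : ∀ i ∈ Finset.Icc 1 s, 0 ≤ e i)
    (he1 : ∑ i ∈ Finset.Icc 2 s, e i ≤ e 1) {a b : ℕ} (ha : 1 ≤ a) (hab : a ≤ b)
    (hb : b ≤ s) : Ep e b - Ep e a ≤ e 1 := by
  rw [Ep_sub e hab]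
  have hsub : Finset.Ioc a b ⊆ Finset.Ioc 1 s := by
    intro m hm
    rw [mem_Ioc] at *
    omega
  have h2 : ∑ m ∈ Finset.Ioc a b, e m ≤ ∑ m ∈ Finset.Ioc 1 s, e m := by
    refine Finset.sum_le_sum_of_subset_of_nonneg hsub fun m hm _ => he m ?_
    rw [mem_Ioc] at hm
    rw [mem_Icc]
    omega
  have h3 : Finset.Icc 2 s = Finset.Ioc 1 s := by rw [← Finset.Icc_add_one_left_eq_Ioc]; rfl
  calc ∑ m ∈ Finset.Ioc a b, e m ≤ ∑ m ∈ Finset.Ioc 1 s, e m := h2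
    _ = ∑ i ∈ Finset.Icc 2 s, e i := by rw [h3]
    _ ≤ e 1 := he1

lemma Sw_nonneg (he : ∀ i ∈ Finset.Icc 1 s, 0 ≤ e i) (hjs : j ≤ s) {i : ℕ}
    (hi : i ∈ (Finset.Icc 1 s).erase j) : 0 ≤ Sw e j i := by
  rw [mem_erase, mem_Icc] at hi
  rw [Sw]
  split
  · exact Ep_diff_nonneg he (by omega) hjs
  · exact Ep_diff_nonneg he (by omega) hi.2.2

lemma cc_pos {i : ℕ} (hi : i ∈ (Finset.Icc 1 s).erase j) : 0 < cc j i := by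
  rw [mem_erase, mem_Icc] at hi
  rw [cc]
  split <;> omega

/-- The key counting lemma: for any threshold `x ≥ 0`, the number of denominator
windows with average slope `≥ x` is at most the number of prefixes with
average slope `≥ x`. -/
lemma count_card (hj : 1 ≤ j) (hjs : j ≤ s)
    (he : ∀ i ∈ Finset.Icc 1 s, 0 ≤ e i)
    (he1 : ∑ i ∈ Finset.Icc 2 s, e i ≤ e 1) {x : ℝ} (hx : 0 ≤ x) :
    (((Finset.Icc 1 s).erase j).filter fun r => x * (cc j r : ℝ) ≤ Sw e j r).card ≤
      (((Finset.Icc 1 s).erase j).filter fun i : ℕ => x * (i : ℝ) ≤ Ep e i).card := by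
  have hT : (Finset.Icc 1 s).erase j = Finset.Icc 1 (j - 1) ∪ Finset.Ioc j s := by
    ext i
    simp only [mem_erase, mem_Icc, mem_union, mem_Ioc]
    omega
  have hdisj : Disjoint (Finset.Icc 1 (j - 1)) (Finset.Ioc j s) := by
    rw [Finset.disjoint_left]
    intro i hi hi'
    rw [mem_Icc] at hi
    rw [mem_Ioc] at hi'
    omega
  set B1 := (Finset.Icc 1 (j - 1)).filter fun r => x * (cc j r : ℝ) ≤ Sw e j r with hB1def
  set B2 := (Finset.Ioc j s).filter fun r => x * (cc j r : ℝ) ≤ Sw e j r with hB2def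
  have hcardB : (((Finset.Icc 1 s).erase j).filter fun r =>
      x * (cc j r : ℝ) ≤ Sw e j r).card = B1.card + B2.card := by
    rw [hT, Finset.filter_union, Finset.card_union_of_disjoint
      (Finset.disjoint_filter_filter hdisj)]
  set a := B1.card with hadef
  set b := B2.card with hbdef
  -- extract the extreme qualifying windows
  obtain ⟨i₁, hi₁1, hi₁j, ha1, ha2⟩ :
      ∃ i₁, 1 ≤ i₁ ∧ i₁ ≤ j ∧ a ≤ j - i₁ ∧
        x * ((j - i₁ : ℕ) : ℝ) ≤ Ep e j - Ep e i₁ := by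
    rcases B1.eq_empty_or_nonempty with hB1e | hB1n
    · refine ⟨j, hj, le_refl j, by rw [hadef, hB1e]; simp, by simp⟩
    · have hmem := Finset.mem_filter.1 (B1.min'_mem hB1n)
      have hIcc := Finset.mem_Icc.1 hmem.1
      have h3 := hmem.2
      have hcc : cc j (B1.min' hB1n) = j - B1.min' hB1n := by
        rw [cc, if_pos (by omega)]
      have hSw : Sw e j (B1.min' hB1n) = Ep e j - Ep e (B1.min' hB1n) := by
        rw [Sw, if_pos (by omega)]
      have hsub : B1 ⊆ Finset.Icc (B1.min' hB1n) (j - 1) := by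
        intro r hr
        exact Finset.mem_Icc.2
          ⟨B1.min'_le r hr, (Finset.mem_Icc.1 (Finset.mem_filter.1 hr).1).2⟩
      have hcard := Finset.card_le_card hsub
      rw [Nat.card_Icc] at hcard
      refine ⟨B1.min' hB1n, hIcc.1, by omega, by omega, ?_⟩
      rw [← hcc, ← hSw]
      exact h3
  obtain ⟨i₂, hi₂j, hi₂s, hb1, hb2⟩ :
      ∃ i₂, j ≤ i₂ ∧ i₂ ≤ s ∧ b ≤ i₂ - j ∧
        x * ((i₂ - j : ℕ) : ℝ) ≤ Ep e i₂ - Ep e j := by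
    rcases B2.eq_empty_or_nonempty with hB2e | hB2n
    · refine ⟨j, le_refl j, hjs, by rw [hbdef, hB2e]; simp, by simp⟩
    · have hmem := Finset.mem_filter.1 (B2.max'_mem hB2n)
      have hIoc := Finset.mem_Ioc.1 hmem.1
      have h3 := hmem.2
      have hcc : cc j (B2.max' hB2n) = B2.max' hB2n - j := by
        rw [cc, if_neg (by omega)]
      have hSw : Sw e j (B2.max' hB2n) = Ep e (B2.max' hB2n) - Ep e j := by
        rw [Sw, if_neg (by omega)]
      have hsub : B2 ⊆ Finset.Icc (j + 1) (B2.max' hB2n) := by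
        intro r hr
        exact Finset.mem_Icc.2
          ⟨(Finset.mem_Ioc.1 (Finset.mem_filter.1 hr).1).1, B2.le_max' r hr⟩
      have hcard := Finset.card_le_card hsub
      rw [Nat.card_Icc] at hcard
      refine ⟨B2.max' hB2n, by omega, hIoc.2, by omega, ?_⟩
      rw [← hcc, ← hSw]
      exact h3
  -- the key inequality: `x * (i₂ - i₁) ≤ e 1`
  have hkey : x * ((i₂ - i₁ : ℕ) : ℝ) ≤ e 1 := by
    have hsplit : ((i₂ - i₁ : ℕ) : ℝ) = ((j - i₁ : ℕ) : ℝ) + ((i₂ - j : ℕ) : ℝ) := by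
      have : (i₂ - i₁ : ℕ) = (j - i₁) + (i₂ - j) := by omega
      rw [this, Nat.cast_add]
    have hd : Ep e i₂ - Ep e i₁ ≤ e 1 := diff_le_e1 he he1 hi₁1 (by omega) hi₂s
    rw [hsplit, mul_add]
    linarith
  have hab_le : a + b ≤ i₂ - i₁ := by omega
  have hi₂s1 : i₂ - i₁ ≤ s - 1 := by omega
  rw [hcardB]
  -- a generic membership builder for the prefix set
  have hmemA : ∀ i : ℕ, 1 ≤ i → i ≤ s → i ≠ j → x * (i : ℝ) ≤ e 1 →
      i ∈ ((Finset.Icc 1 s).erase j).filter fun i : ℕ => x * (i : ℝ) ≤ Ep e i := by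
    intro i h1 h2 h3 h4
    rw [Finset.mem_filter, mem_erase, mem_Icc]
    exact ⟨⟨h3, h1, h2⟩, h4.trans (e1_le_Ep he h1 h2)⟩
  by_cases hcase : a + b < j
  · -- all prefixes `1, …, a+b` qualify and avoid `j`
    have hsub : Finset.Icc 1 (a + b) ⊆
        ((Finset.Icc 1 s).erase j).filter fun i : ℕ => x * (i : ℝ) ≤ Ep e i := by
      intro i hi
      rw [mem_Icc] at hi
      refine hmemA i hi.1 (by omega) (by omega) ?_
      calc x * (i : ℝ) ≤ x * ((i₂ - i₁ : ℕ) : ℝ) := by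
            refine mul_le_mul_of_nonneg_left ?_ hx
            have hle : i ≤ i₂ - i₁ := by omega
            exact Nat.cast_le.mpr hle
        _ ≤ e 1 := hkey
    have := Finset.card_le_card hsub
    rw [Nat.card_Icc] at this
    omega
  · push_neg at hcase
    have hbpos : 1 ≤ b := by omega
    have hi₂j' : j + 1 ≤ i₂ := by omega
    -- `i₂` itself qualifies
    have hi₂A : i₂ ∈ ((Finset.Icc 1 s).erase j).filter fun i : ℕ => x * (i : ℝ) ≤ Ep e i := by
      rw [Finset.mem_filter, mem_erase, mem_Icc]
      refine ⟨⟨by omega, by omega, hi₂s⟩, ?_⟩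
      have h1 : e 1 ≤ Ep e i₁ := e1_le_Ep he hi₁1 (by omega)
      have h2 : x * ((i₂ - i₁ : ℕ) : ℝ) ≤ Ep e i₂ - Ep e i₁ := by
        have hsplit : ((i₂ - i₁ : ℕ) : ℝ) = ((j - i₁ : ℕ) : ℝ) + ((i₂ - j : ℕ) : ℝ) := by
          have : (i₂ - i₁ : ℕ) = (j - i₁) + (i₂ - j) := by omega
          rw [this, Nat.cast_add]
        rw [hsplit, mul_add]
        linarith
      have h3 : (i₂ : ℝ) ≤ 2 * ((i₂ - i₁ : ℕ) : ℝ) := by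
        have : i₂ ≤ 2 * (i₂ - i₁) := by omega
        calc (i₂ : ℝ) ≤ ((2 * (i₂ - i₁) : ℕ) : ℝ) := Nat.cast_le.2 this
          _ = 2 * ((i₂ - i₁ : ℕ) : ℝ) := by rw [Nat.cast_mul]; norm_num
      calc x * (i₂ : ℝ) ≤ x * (2 * ((i₂ - i₁ : ℕ) : ℝ)) := mul_le_mul_of_nonneg_left h3 hx
        _ = x * ((i₂ - i₁ : ℕ) : ℝ) + x * ((i₂ - i₁ : ℕ) : ℝ) := by ring
        _ ≤ Ep e i₁ + (Ep e i₂ - Ep e i₁) := by linarith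
        _ = Ep e i₂ := by ring
    have hsub : insert i₂ ((Finset.Icc 1 (a + b)).erase j) ⊆
        ((Finset.Icc 1 s).erase j).filter fun i : ℕ => x * (i : ℝ) ≤ Ep e i := by
      intro i hi
      rw [Finset.mem_insert] at hi
      rcases hi with rfl | hi
      · exact hi₂A
      · rw [mem_erase, mem_Icc] at hi
        refine hmemA i hi.2.1 (by omega) hi.1 ?_
        calc x * (i : ℝ) ≤ x * ((i₂ - i₁ : ℕ) : ℝ) := by
              refine mul_le_mul_of_nonneg_left ?_ hx
              have hle : i ≤ i₂ - i₁ := by omega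
              exact Nat.cast_le.mpr hle
          _ ≤ e 1 := hkey
    have hnotmem : i₂ ∉ (Finset.Icc 1 (a + b)).erase j := by
      rw [mem_erase, mem_Icc]
      push_neg
      intro _ h1
      omega
    have hjmem : j ∈ Finset.Icc 1 (a + b) := by
      rw [mem_Icc]
      omega
    have hcard : (insert i₂ ((Finset.Icc 1 (a + b)).erase j)).card = a + b := by
      rw [Finset.card_insert_of_notMem hnotmem, Finset.card_erase_of_mem hjmem,
        Nat.card_Icc]
      omega
    have := Finset.card_le_card hsub
    omega

/-- Hall's theorem gives an injection matching each denominator index to a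
numerator index dominating it. -/
lemma exists_inj (hj : 1 ≤ j) (hjs : j ≤ s)
    (he : ∀ i ∈ Finset.Icc 1 s, 0 ≤ e i)
    (he1 : ∑ i ∈ Finset.Icc 2 s, e i ≤ e 1) :
    ∃ f : {r // r ∈ (Finset.Icc 1 s).erase j} → ℕ, Function.Injective f ∧
      ∀ r, f r ∈ (Finset.Icc 1 s).erase j ∧
        Sw e j r.1 * (f r : ℝ) ≤ (cc j r.1 : ℝ) * Ep e (f r) := by
  set T := (Finset.Icc 1 s).erase j with hTdef
  set t : {r // r ∈ T} → Finset ℕ := fun r =>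
    T.filter fun i : ℕ => Sw e j r.1 * (i : ℝ) ≤ (cc j r.1 : ℝ) * Ep e i with htdef
  have hall : ∀ s' : Finset {r // r ∈ T}, s'.card ≤ (s'.biUnion t).card := by
    intro s'
    rcases s'.eq_empty_or_nonempty with rfl | hne
    · simp
    · obtain ⟨r₀, hr₀s, hr₀min⟩ :=
        s'.exists_min_image (fun r => Sw e j r.1 / (cc j r.1 : ℝ)) hne
      have hccp : ∀ r : {r // r ∈ T}, (0 : ℝ) < (cc j r.1 : ℝ) := fun r => by
        exact_mod_cast Nat.cast_pos.2 (cc_pos r.2)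
      set x := Sw e j r₀.1 / (cc j r₀.1 : ℝ) with hxdef
      have hx : 0 ≤ x := div_nonneg (Sw_nonneg he hjs r₀.2) (hccp r₀).le
      have step1 : s'.card ≤ (T.filter fun r => x * (cc j r : ℝ) ≤ Sw e j r).card := by
        calc s'.card = (s'.image Subtype.val).card :=
              (Finset.card_image_of_injective s' Subtype.val_injective).symm
          _ ≤ _ := by
              refine Finset.card_le_card ?_
              intro r hr
              rw [Finset.mem_image] at hr
              obtain ⟨r', hr', rfl⟩ := hr
              rw [Finset.mem_filter]
              refine ⟨r'.2, ?_⟩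
              have hmin := hr₀min r' hr'
              have := (le_div_iff₀ (hccp r')).1 hmin
              exact this
      have step2 : (T.filter fun r => x * (cc j r : ℝ) ≤ Sw e j r).card ≤
          (T.filter fun i : ℕ => x * (i : ℝ) ≤ Ep e i).card :=
        count_card hj hjs he he1 hx
      have step3 : (T.filter fun i : ℕ => x * (i : ℝ) ≤ Ep e i) = t r₀ := by
        rw [htdef]
        refine Finset.filter_congr fun i _ => ?_
        rw [hxdef, div_mul_eq_mul_div, div_le_iff₀ (hccp r₀), mul_comm (Ep e i)]
      have step4 : (t r₀).card ≤ (s'.biUnion t).card :=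
        Finset.card_le_card (Finset.subset_biUnion_of_mem t hr₀s)
      rw [← step3] at step4
      omega
  obtain ⟨f, hfinj, hft⟩ := (Finset.all_card_le_biUnion_card_iff_exists_injective t).1 hall
  refine ⟨f, hfinj, fun r => ?_⟩
  have := hft r
  rw [htdef, Finset.mem_filter] at this
  exact this

lemma prod_sub_left (hj : 1 ≤ j) :
    ∏ i ∈ Finset.Icc 1 (j - 1), (j - i) = (j - 1)! := by
  have h : ∏ i ∈ Finset.Icc 1 (j - 1), (j - i) = ∏ i ∈ Finset.Icc 1 (j - 1), i := by
    refine Finset.prod_nbij' (fun i => j - i) (fun i => j - i) ?_ ?_ ?_ ?_ ?_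
    · intro i hi
      simp only [Finset.mem_Icc] at hi ⊢
      omega
    · intro i hi
      simp only [Finset.mem_Icc] at hi ⊢
      omega
    · intro i hi
      simp only [Finset.mem_Icc] at hi
      show j - (j - i) = i
      omega
    · intro i hi
      simp only [Finset.mem_Icc] at hi
      show j - (j - i) = i
      omega
    · intro i _
      rfl
  rw [h, ← Finset.Ico_add_one_right_eq_Icc, Finset.prod_Ico_id_eq_factorial]

lemma prod_sub_right (hjs : j ≤ s) :
    ∏ i ∈ Finset.Ioc j s, (i - j) = (s - j)! := by
  have h : ∏ i ∈ Finset.Ioc j s, (i - j) = ∏ i ∈ Finset.Icc 1 (s - j), i := by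
    refine Finset.prod_nbij' (fun i => i - j) (fun i => i + j) ?_ ?_ ?_ ?_ ?_
    · intro i hi
      simp only [Finset.mem_Ioc] at hi
      simp only [Finset.mem_Icc]
      omega
    · intro i hi
      simp only [Finset.mem_Icc] at hi
      simp only [Finset.mem_Ioc]
      omega
    · intro i hi
      simp only [Finset.mem_Ioc] at hi
      show i - j + j = i
      omega
    · intro i hi
      simp only [Finset.mem_Icc] at hi
      show i + j - j = i
      omega
    · intro i _
      rfl
  rw [h, ← Finset.Ico_add_one_right_eq_Icc, Finset.prod_Ico_id_eq_factorial]

/-- The binomial identity `∏_{i∈T} i = C(s,j) ∏_{i∈T} |i-j|`. -/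
lemma prod_id_eq_choose_mul (hj : 1 ≤ j) (hjs : j ≤ s) :
    ∏ i ∈ (Finset.Icc 1 s).erase j, i =
      s.choose j * ∏ i ∈ (Finset.Icc 1 s).erase j, cc j i := by
  have hT : (Finset.Icc 1 s).erase j = Finset.Icc 1 (j - 1) ∪ Finset.Ioc j s := by
    ext i
    simp only [mem_erase, mem_Icc, mem_union, mem_Ioc]
    omega
  have hdisj : Disjoint (Finset.Icc 1 (j - 1)) (Finset.Ioc j s) := by
    rw [Finset.disjoint_left]
    intro i hi hi'
    rw [mem_Icc] at hi
    rw [mem_Ioc] at hi'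
    omega
  have hcc : ∏ i ∈ (Finset.Icc 1 s).erase j, cc j i = (j - 1)! * (s - j)! := by
    rw [hT, Finset.prod_union hdisj]
    congr 1
    · rw [← prod_sub_left hj]
      refine Finset.prod_congr rfl fun i hi => ?_
      rw [mem_Icc] at hi
      rw [cc, if_pos (by omega)]
    · rw [← prod_sub_right hjs]
      refine Finset.prod_congr rfl fun i hi => ?_
      rw [mem_Ioc] at hi
      rw [cc, if_neg (by omega)]
  have hjmem : j ∈ Finset.Icc 1 s := by
    rw [mem_Icc]
    exact ⟨hj, hjs⟩
  have hfull : (∏ i ∈ (Finset.Icc 1 s).erase j, i) * j = s ! := by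
    have h := Finset.prod_erase_mul (Finset.Icc 1 s) (fun i => i) hjmem
    rw [h, ← Finset.Ico_add_one_right_eq_Icc, Finset.prod_Ico_id_eq_factorial]
  have hch : s.choose j * ((j - 1)! * (s - j)!) * j = s ! := by
    have h1 : j * (j - 1)! = j ! := Nat.mul_factorial_pred (by omega)
    calc s.choose j * ((j - 1)! * (s - j)!) * j
        = s.choose j * (j * (j - 1)!) * (s - j)! := by ring
      _ = s.choose j * j ! * (s - j)! := by rw [h1]
      _ = s ! := Nat.choose_mul_factorial_mul_factorial hjs
  have : (∏ i ∈ (Finset.Icc 1 s).erase j, i) * j =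
      (s.choose j * ∏ i ∈ (Finset.Icc 1 s).erase j, cc j i) * j := by
    rw [hfull, hcc, ← hch]
  exact Nat.eq_of_mul_eq_mul_right (by omega) this

end

end BfrakAux

/-- If `e ∈ ℝ^s_{≥0}` and `e₁ ≥ e₂ + ⋯ + e_s`, then `𝔟ⱼ(e) ≥ C(s, j)` for all `1 ≤ j ≤ s`. -/
theorem bfrak_ge_choose (s : ℕ) (hs : 1 ≤ s) (e : ℕ → ℝ)
    (he : ∀ i ∈ Finset.Icc 1 s, 0 ≤ e i)
    (he1 : ∑ i ∈ Finset.Icc 2 s, e i ≤ e 1)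
    (j : ℕ) (hj : 1 ≤ j) (hjs : j ≤ s) :
    (s.choose j : ℝ) ≤ bfrak s j e := by
  classical
  open Finset BfrakAux in
  set T := (Finset.Icc 1 s).erase j with hTdef
  have hT : T = Finset.Icc 1 (j - 1) ∪ Finset.Ioc j s := by
    ext i
    simp only [hTdef, Finset.mem_erase, Finset.mem_Icc, Finset.mem_union, Finset.mem_Ioc]
    omega
  have hdisj : Disjoint (Finset.Icc 1 (j - 1)) (Finset.Ioc j s) := by
    rw [Finset.disjoint_left]
    intro i hi hi'
    rw [Finset.mem_Icc] at hi
    rw [Finset.mem_Ioc] at hi'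
    omega
  -- rewrite the denominator of `bfrak` as a single product over `T`
  have hden : ((∏ i ∈ Finset.Icc 1 (j - 1), ((j : ℝ) - (i : ℝ) + ∑ m ∈ Finset.Icc (i + 1) j, e m)) *
      ∏ i ∈ Finset.Icc (j + 1) s, ((i : ℝ) - (j : ℝ) + ∑ m ∈ Finset.Icc (j + 1) i, e m)) =
      ∏ i ∈ T, ((cc j i : ℝ) + Sw e j i) := by
    rw [hT, Finset.prod_union hdisj]
    congr 1
    · refine Finset.prod_congr rfl fun i hi => ?_
      rw [Finset.mem_Icc] at hi
      have h1 : cc j i = j - i := by rw [cc, if_pos (by omega)]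
      have h2 : Sw e j i = Ep e j - Ep e i := by rw [Sw, if_pos (by omega)]
      have h3 : Ep e j - Ep e i = ∑ m ∈ Finset.Icc (i + 1) j, e m := by
        rw [Ep_sub e (by omega : i ≤ j), ← Finset.Icc_add_one_left_eq_Ioc]
      have h4 : ((j - i : ℕ) : ℝ) = (j : ℝ) - (i : ℝ) := by
        rw [Nat.cast_sub (by omega)]
      rw [h1, h2, h3, h4]
    · refine Finset.prod_congr (by rw [← Finset.Icc_add_one_left_eq_Ioc]) fun i hi => ?_
      rw [← Finset.Icc_add_one_left_eq_Ioc, Finset.mem_Icc] at hi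
      have h1 : cc j i = i - j := by rw [cc, if_neg (by omega)]
      have h2 : Sw e j i = Ep e i - Ep e j := by rw [Sw, if_neg (by omega)]
      have h3 : Ep e i - Ep e j = ∑ m ∈ Finset.Icc (j + 1) i, e m := by
        rw [Ep_sub e (by omega : j ≤ i), ← Finset.Icc_add_one_left_eq_Ioc]
      have h4 : ((i - j : ℕ) : ℝ) = (i : ℝ) - (j : ℝ) := by
        rw [Nat.cast_sub (by omega)]
      rw [h1, h2, h3, h4]
  have hccp : ∀ i ∈ T, (0 : ℝ) < (cc j i : ℝ) := fun i hi => by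
    exact_mod_cast Nat.cast_pos.2 (cc_pos hi)
  have hSwn : ∀ i ∈ T, (0 : ℝ) ≤ Sw e j i := fun i hi => Sw_nonneg he hjs hi
  have hD : (0 : ℝ) < ∏ i ∈ T, ((cc j i : ℝ) + Sw e j i) :=
    Finset.prod_pos fun i hi => add_pos_of_pos_of_nonneg (hccp i hi) (hSwn i hi)
  have hbfrak : bfrak s j e =
      (∏ i ∈ T, ((i : ℝ) + Ep e i)) / ∏ i ∈ T, ((cc j i : ℝ) + Sw e j i) := by
    rw [bfrak, hden]
    rfl
  rw [hbfrak, le_div_iff₀ hD]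
  -- obtain the matching
  obtain ⟨f, hfinj, hf⟩ := exists_inj hj hjs he he1
  -- the image of `f` is all of `T`
  have himg : Finset.image (fun r : {r // r ∈ T} => f r) T.attach = T := by
    apply Finset.eq_of_subset_of_card_le
    · intro i hi
      rw [Finset.mem_image] at hi
      obtain ⟨r, _, rfl⟩ := hi
      exact (hf r).1
    · rw [Finset.card_image_of_injective _ hfinj, Finset.card_attach]
  have hbijprod : ∀ g : ℕ → ℝ, ∏ r ∈ T.attach, g (f r) = ∏ i ∈ T, g i := by
    intro g
    conv_rhs => rw [← himg]
    rw [Finset.prod_image fun a _ b _ h => hfinj h]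
  -- per-pair inequality
  have hpair : ∀ r ∈ T.attach, (f r : ℝ) * ((cc j r.1 : ℝ) + Sw e j r.1) ≤
      ((f r : ℝ) + Ep e (f r)) * (cc j r.1 : ℝ) := by
    intro r _
    have h := (hf r).2
    have h2 : Sw e j r.1 * (f r : ℝ) ≤ (cc j r.1 : ℝ) * Ep e (f r) := h
    nlinarith [h2]
  have hprodle : ∏ r ∈ T.attach, ((f r : ℝ) * ((cc j r.1 : ℝ) + Sw e j r.1)) ≤
      ∏ r ∈ T.attach, (((f r : ℝ) + Ep e (f r)) * (cc j r.1 : ℝ)) := by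
    refine Finset.prod_le_prod (fun r _ => ?_) hpair
    have h1 : (0 : ℝ) ≤ (f r : ℝ) := Nat.cast_nonneg _
    have h2 : (0 : ℝ) < (cc j r.1 : ℝ) + Sw e j r.1 :=
      add_pos_of_pos_of_nonneg (by exact_mod_cast Nat.cast_pos.2 (cc_pos r.2))
        (Sw_nonneg he hjs r.2)
    exact mul_nonneg h1 h2.le
  -- rearrange both sides
  have hL : ∏ r ∈ T.attach, ((f r : ℝ) * ((cc j r.1 : ℝ) + Sw e j r.1)) =
      (∏ i ∈ T, (i : ℝ)) * ∏ i ∈ T, ((cc j i : ℝ) + Sw e j i) := by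
    rw [Finset.prod_mul_distrib, hbijprod (fun i => (i : ℝ))]
    congr 1
    exact Finset.prod_attach T fun i => (cc j i : ℝ) + Sw e j i
  have hR : ∏ r ∈ T.attach, (((f r : ℝ) + Ep e (f r)) * (cc j r.1 : ℝ)) =
      (∏ i ∈ T, ((i : ℝ) + Ep e i)) * ∏ i ∈ T, (cc j i : ℝ) := by
    rw [Finset.prod_mul_distrib, hbijprod (fun i => (i : ℝ) + Ep e i)]
    congr 1
    exact Finset.prod_attach T fun i => (cc j i : ℝ)
  rw [hL, hR] at hprodle
  -- the binomial identity
  have hnat : (∏ i ∈ T, (i : ℝ)) = (s.choose j : ℝ) * ∏ i ∈ T, (cc j i : ℝ) := by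
    have h := prod_id_eq_choose_mul (j := j) (s := s) hj hjs
    have h2 : ((∏ i ∈ T, i : ℕ) : ℝ) = ((s.choose j * ∏ i ∈ T, cc j i : ℕ) : ℝ) := by
      exact_mod_cast congrArg (Nat.cast : ℕ → ℝ) h
    rw [Nat.cast_mul, Nat.cast_prod, Nat.cast_prod] at h2
    exact h2
  rw [hnat] at hprodle
  have hCp : (0 : ℝ) < ∏ i ∈ T, (cc j i : ℝ) := Finset.prod_pos hccp
  have hgoal : (s.choose j : ℝ) * (∏ i ∈ T, ((cc j i : ℝ) + Sw e j i)) * (∏ i ∈ T, (cc j i : ℝ)) ≤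
      (∏ i ∈ T, ((i : ℝ) + Ep e i)) * ∏ i ∈ T, (cc j i : ℝ) := by
    calc (s.choose j : ℝ) * (∏ i ∈ T, ((cc j i : ℝ) + Sw e j i)) * (∏ i ∈ T, (cc j i : ℝ))
        = (s.choose j : ℝ) * (∏ i ∈ T, (cc j i : ℝ)) * ∏ i ∈ T, ((cc j i : ℝ) + Sw e j i) := by
          ring
      _ ≤ _ := hprodle
  exact le_of_mul_le_mul_right hgoal hCp
end

section
/- Let s ≥ 1 and let d_0 < d_1 < ⋯ < d_s be integers (a degree sequence) with d_0 ≤ 0 and d_s − s ≤ 2·d_1 − 2. Then for every integer 1 ≤ j ≤ s, ∏_{1 ≤ i ≤ s, i ≠ j} (d_i − d_0)/|d_i − d_j| ≥ binom(s, j). -/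
open Finset

lemma aux_prodId (x k : ℕ) :
    (∏ r ∈ Finset.range k, (x + 1 + r)) = (x + k).choose k * k.factorial := by
  induction k with
  | zero => simp
  | succ k ih =>
    rw [Finset.prod_range_succ, ih]
    have h : (x + k + 1) * (x + k).choose k = (x + k + 1).choose (k + 1) * (k + 1) :=
      Nat.add_one_mul_choose_eq (x + k) k
    have e1 : x + (k + 1) = (x + k) + 1 := by omega
    have e2 : x + 1 + k = (x + k) + 1 := by omega
    rw [e1, e2, Nat.factorial_succ]
    calc (x + k).choose k * k.factorial * ((x + k) + 1)
        = ((x + k + 1) * (x + k).choose k) * k.factorial := by ring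
      _ = ((x + k + 1).choose (k + 1) * (k + 1)) * k.factorial := by rw [h]
      _ = (x + k + 1).choose (k + 1) * ((k + 1) * k.factorial) := by ring

lemma aux_ID1 (m p q : ℕ) :
    (m + p + q).choose (p + q) * ∏ r ∈ Finset.range q, (p + 1 + r)
      = (m + p).choose p * ∏ r ∈ Finset.range q, (m + p + 1 + r) := by
  induction q with
  | zero => simp
  | succ q ih =>
    rw [Finset.prod_range_succ, Finset.prod_range_succ]
    have h : (m + p + q + 1) * (m + p + q).choose (p + q)
        = (m + p + q + 1).choose (p + q + 1) * (p + q + 1) :=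
      Nat.add_one_mul_choose_eq (m + p + q) (p + q)
    have e1 : m + p + (q + 1) = (m + p + q) + 1 := by omega
    have e2 : p + (q + 1) = (p + q) + 1 := by omega
    have e3 : p + 1 + q = (p + q) + 1 := by omega
    rw [e1, e2, e3]
    calc ((m+p+q) + 1).choose ((p+q)+1) * ((∏ r ∈ Finset.range q, (p+1+r)) * ((p+q)+1))
        = (((m+p+q) + 1).choose ((p+q)+1) * ((p+q)+1)) * ∏ r ∈ Finset.range q, (p+1+r) := by
          ring
      _ = ((m+p+q) + 1) * (m+p+q).choose (p+q) * ∏ r ∈ Finset.range q, (p+1+r) := by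
          rw [h]
      _ = ((m+p+q) + 1) * ((m+p+q).choose (p+q) * ∏ r ∈ Finset.range q, (p+1+r)) := by ring
      _ = ((m+p+q) + 1) * ((m+p).choose p * ∏ r ∈ Finset.range q, (m+p+1+r)) := by rw [ih]
      _ = (m+p).choose p * ((∏ r ∈ Finset.range q, (m+p+1+r)) * (m+p+1+q)) := by ring

lemma aux_vander (a b p q : ℕ) : a.choose p * b.choose q ≤ (a + b).choose (p + q) := by
  rw [Nat.add_choose_eq]
  have hmem : (p, q) ∈ Finset.HasAntidiagonal.antidiagonal (p + q) := by
    simp [Finset.HasAntidiagonal.mem_antidiagonal]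
  exact Finset.single_le_sum (f := fun ij : ℕ × ℕ => a.choose ij.1 * b.choose ij.2)
    (fun i _ => Nat.zero_le _) hmem

lemma aux_S (m p q : ℕ) :
    (p + 1 + q).choose (p + 1) * (m + p + q).choose (p + q)
      ≤ (m + p).choose p * (2 * m + p + 1 + q).choose q := by
  have hsym : (p + 1 + q).choose (p + 1) = (p + 1 + q).choose q := by
    have h := Nat.choose_symm (n := p + 1 + q) (k := q) (by omega)
    have : p + 1 + q - q = p + 1 := by omega
    rw [this] at h; exact h
  have hK : 0 < (q.factorial * ∏ r ∈ Finset.range q, (p + 1 + r)) := by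
    have : 0 < ∏ r ∈ Finset.range q, (p + 1 + r) :=
      Finset.prod_pos (fun r _ => by omega)
    positivity
  refine Nat.le_of_mul_le_mul_right ?_ hK
  -- pointwise core inequality
  have hterm : (∏ r ∈ Finset.range q, ((p+2+r) * (m+p+1+r)))
      ≤ ∏ r ∈ Finset.range q, ((p+1+r) * (2*m+p+2+r)) := by
    apply Finset.prod_le_prod' (f := fun r => (p+2+r)*(m+p+1+r))
    intro r _
    have : (p+1+r) * (2*m+p+2+r) = (p+2+r) * (m+p+1+r) + m * (p+r) := by ring
    omega
  calc (p+1+q).choose (p+1) * (m+p+q).choose (p+q) * (q.factorial * ∏ r ∈ Finset.range q, (p+1+r))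
      = ((p+1+q).choose q * q.factorial) * ((m+p+q).choose (p+q) * ∏ r ∈ Finset.range q, (p+1+r)) := by
        rw [hsym]; ring
    _ = (∏ r ∈ Finset.range q, (p+1+1+r)) * ((m+p).choose p * ∏ r ∈ Finset.range q, (m+p+1+r)) := by
        rw [aux_prodId (p+1) q, aux_ID1]
    _ = (m+p).choose p * ((∏ r ∈ Finset.range q, (p+2+r)) * ∏ r ∈ Finset.range q, (m+p+1+r)) := by
        have : ∀ r, p+1+1+r = p+2+r := fun r => by omega
        simp only [this]; ring
    _ = (m+p).choose p * ∏ r ∈ Finset.range q, ((p+2+r) * (m+p+1+r)) := by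
        rw [Finset.prod_mul_distrib]
    _ ≤ (m+p).choose p * ∏ r ∈ Finset.range q, ((p+1+r) * (2*m+p+2+r)) := by
        exact Nat.mul_le_mul_left _ hterm
    _ = (m+p).choose p * ((∏ r ∈ Finset.range q, (p+1+r)) * ∏ r ∈ Finset.range q, (2*m+p+2+r)) := by
        rw [Finset.prod_mul_distrib]
    _ = (m+p).choose p * ((2*m+p+1+q).choose q * q.factorial) * ∏ r ∈ Finset.range q, (p+1+r) := by
        rw [← aux_prodId (2*m+p+1) q]; ring
    _ = (m+p).choose p * (2*m+p+1+q).choose q * (q.factorial * ∏ r ∈ Finset.range q, (p+1+r)) := by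
        ring

lemma aux_key (p q u v : ℕ) :
    (p + 1 + q).choose (p + 1) * ((∏ r ∈ Finset.range p, (u + 1 + r)) * ∏ r ∈ Finset.range q, (v + 1 + r))
      ≤ (∏ r ∈ Finset.range p, (u + v + 1 + r)) * ∏ r ∈ Finset.range q, (2 * (u + v) + p + 2 + r) := by
  set m := u + v with hm
  have hPu : (∏ r ∈ Finset.range p, (u + 1 + r)) = (u + p).choose p * p.factorial := aux_prodId u p
  have hPv : (∏ r ∈ Finset.range q, (v + 1 + r)) = (v + q).choose q * q.factorial := aux_prodId v q
  have hPm : (∏ r ∈ Finset.range p, (m + 1 + r)) = (m + p).choose p * p.factorial := aux_prodId m p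
  have hP2 : (∏ r ∈ Finset.range q, (2*m + p + 1 + 1 + r)) = (2*m + p + 1 + q).choose q * q.factorial :=
    aux_prodId (2*m+p+1) q
  have e2 : ∀ r, 2 * m + p + 2 + r = 2*m+p+1+1+r := fun r => by omega
  have e3 : ∀ r, u + v + 1 + r = m + 1 + r := fun r => by omega
  simp only [e2, e3]
  rw [hPu, hPv, hPm, hP2]
  calc (p+1+q).choose (p+1) * ((u + p).choose p * p.factorial * ((v + q).choose q * q.factorial))
      = ((p+1+q).choose (p+1) * ((u+p).choose p * (v+q).choose q)) * (p.factorial * q.factorial) := by ring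
    _ ≤ ((p+1+q).choose (p+1) * (m + p + q).choose (p + q)) * (p.factorial * q.factorial) := by
        have h := aux_vander (u+p) (v+q) p q
        have e : u + p + (v + q) = m + p + q := by omega
        rw [e] at h
        exact Nat.mul_le_mul_right _ (Nat.mul_le_mul_left _ h)
    _ ≤ ((m+p).choose p * (2*m+p+1+q).choose q) * (p.factorial * q.factorial) := by
        exact Nat.mul_le_mul_right _ (aux_S m p q)
    _ = (m + p).choose p * p.factorial * ((2*m+p+1+q).choose q * q.factorial) := by ring

lemma aux_nat (s j U V : ℕ) (hj : 1 ≤ j) (hjs : j ≤ s) :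
    s.choose j * ((∏ i ∈ Finset.Ico 1 j, (U + j - i)) * ∏ i ∈ Finset.Icc (j+1) s, (V + i - j))
      ≤ (∏ i ∈ Finset.Ico 1 j, (U + V + i)) * ∏ i ∈ Finset.Icc (j+1) s, (2*U + 2*V + i) := by
  have hp : j - 1 + 1 = j := by omega
  set p := j - 1 with hpdef
  set q := s - j with hqdef
  have h1 : ∏ i ∈ Finset.Ico 1 j, (U + j - i) = ∏ r ∈ Finset.range p, (U + 1 + r) := by
    rw [Finset.prod_Ico_eq_prod_range, ← Finset.prod_range_reflect (fun r => U + 1 + r) p]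
    apply Finset.prod_congr rfl
    intro r hr
    simp only [Finset.mem_range] at hr
    omega
  have h2 : ∏ i ∈ Finset.Ico 1 j, (U + V + i) = ∏ r ∈ Finset.range p, (U + V + 1 + r) := by
    rw [Finset.prod_Ico_eq_prod_range]
    apply Finset.prod_congr rfl
    intro r hr; omega
  have h3 : ∏ i ∈ Finset.Icc (j+1) s, (V + i - j) = ∏ r ∈ Finset.range q, (V + 1 + r) := by
    rw [← Finset.Ico_add_one_right_eq_Icc, Finset.prod_Ico_eq_prod_range]
    have : s + 1 - (j + 1) = q := by omega
    rw [this]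
    apply Finset.prod_congr rfl
    intro r hr; omega
  have h4 : ∏ i ∈ Finset.Icc (j+1) s, (2*U + 2*V + i)
      = ∏ r ∈ Finset.range q, (2*(U+V) + p + 2 + r) := by
    rw [← Finset.Ico_add_one_right_eq_Icc, Finset.prod_Ico_eq_prod_range]
    have : s + 1 - (j + 1) = q := by omega
    rw [this]
    apply Finset.prod_congr rfl
    intro r hr; omega
  rw [h1, h2, h3, h4]
  have h5 : s.choose j = (p + 1 + q).choose (p + 1) := by
    have e1 : p + 1 + q = s := by omega
    have e2 : p + 1 = j := by omega
    rw [e1, e2]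
  rw [h5]
  exact aux_key p q U V
/-- Let `d₀ < d₁ < ⋯ < d_s` be a degree sequence with `d₀ ≤ 0` and `d_s − s ≤ 2·d₁ − 2`.
Then the `j`-th total Betti number of the normalized pure diagram of type `d`, namely
`∏_{1 ≤ i ≤ s, i ≠ j} (dᵢ − d₀)/|dᵢ − dⱼ|`, is at least `C(s, j)` for all `1 ≤ j ≤ s`. -/
theorem pure_diagram_betti_ge_choose (s : ℕ) (hs : 1 ≤ s) (d : ℕ → ℤ)
    (hmono : ∀ i < s, d i < d (i + 1))
    (hd0 : d 0 ≤ 0) (hreg : d s - (s : ℤ) ≤ 2 * d 1 - 2)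
    (j : ℕ) (hj : 1 ≤ j) (hjs : j ≤ s) :
    (s.choose j : ℝ) ≤
      ∏ i ∈ (Finset.Icc 1 s).erase j, ((d i : ℝ) - (d 0 : ℝ)) / |(d i : ℝ) - (d j : ℝ)| := by
  have hmono2 : ∀ k, k ≤ s → ∀ i, i ≤ k → (d i : ℤ) + (k : ℤ) - (i : ℤ) ≤ d k := by
    intro k
    induction k with
    | zero => intro _ i hi; interval_cases i; simp
    | succ k ih =>
      intro hks i hik
      by_cases h : i = k + 1
      · subst h; push_cast; omega
      · have h2 := ih (by omega) i (by omega)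
        have h3 := hmono k (by omega)
        push_cast at h2 ⊢
        omega
  have h10 : (d 0 : ℤ) + 1 ≤ d 1 := by
    have h := hmono 0 hs
    norm_num at h
    omega
  set α : ℤ := d 1 - d 0 with hαdef
  set nn : ℤ := d j - d 0 with hndef
  set β : ℤ := d s - d 0 with hβdef
  have hα1 : 1 ≤ α := by omega
  have hjα : α + (j : ℤ) - 1 ≤ nn := by
    have := hmono2 j hjs 1 hj; omega
  have hβn : nn + (s : ℤ) - (j : ℤ) ≤ β := by
    have := hmono2 s le_rfl j hjs; omega
  have hqp : β ≤ 2 * α + (s : ℤ) - 2 := by omega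
  set u : ℤ := nn - α - (j : ℤ) + 1 with hudef
  set v : ℤ := β - nn - (s : ℤ) + (j : ℤ) with hvdef
  have hu0 : 0 ≤ u := by omega
  have hv0 : 0 ≤ v := by omega
  have hn2 : 2 * u + v + (j : ℤ) ≤ nn := by omega
  obtain ⟨U, hU⟩ := Int.eq_ofNat_of_zero_le hu0
  obtain ⟨V, hV⟩ := Int.eq_ofNat_of_zero_le hv0
  have hset : (Finset.Icc 1 s).erase j = Finset.Ico 1 j ∪ Finset.Icc (j+1) s := by
    ext i
    simp only [Finset.mem_erase, Finset.mem_Icc, Finset.mem_Ico, Finset.mem_union]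
    omega
  have hdisj : Disjoint (Finset.Ico 1 j) (Finset.Icc (j+1) s) := by
    rw [Finset.disjoint_left]
    intro i h1 h2
    simp only [Finset.mem_Ico] at h1
    simp only [Finset.mem_Icc] at h2
    omega
  rw [hset, Finset.prod_union hdisj]
  -- per-index bounds
  have hboundL : ∀ i ∈ Finset.Ico 1 j,
      ((U + V + i : ℕ) : ℝ) / ((U + j - i : ℕ) : ℝ)
        ≤ ((d i : ℝ) - (d 0 : ℝ)) / |(d i : ℝ) - (d j : ℝ)| := by
    intro i hi
    simp only [Finset.mem_Ico] at hi
    obtain ⟨hi1, hi2⟩ := hi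
    have hxi : α + (i : ℤ) - 1 ≤ d i - d 0 := by
      have := hmono2 i (by omega) 1 hi1; omega
    have hji : (j : ℤ) - (i : ℤ) ≤ d j - d i := by
      have := hmono2 j hjs i (by omega); omega
    have hdji : (0 : ℤ) < d j - d i := by omega
    have habs : |(d i : ℝ) - (d j : ℝ)| = (d j : ℝ) - (d i : ℝ) := by
      rw [abs_sub_comm, abs_of_nonneg]
      have : (d i : ℝ) ≤ (d j : ℝ) := by exact_mod_cast (by omega : d i ≤ d j)
      linarith
    rw [habs]
    have hden1 : (0 : ℝ) < ((U + j - i : ℕ) : ℝ) := by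
      have : 0 < U + j - i := by omega
      exact_mod_cast this
    have hden2 : (0 : ℝ) < (d j : ℝ) - (d i : ℝ) := by exact_mod_cast hdji
    rw [div_le_div_iff₀ hden1 hden2]
    have hZ : (u + v + (i : ℤ)) * (d j - d i) ≤ (d i - d 0) * (u + (j : ℤ) - (i : ℤ)) := by
      have T1 : (0 : ℤ) ≤ (2*u + v + (j : ℤ)) * ((d i - d 0) - ((d j - d 0) - u - (j : ℤ) + i)) := by
        apply mul_nonneg (by omega) (by omega)
      have T2 : (0 : ℤ) ≤ (u + (j : ℤ) - i) * ((d j - d 0) - (2*u + v + (j : ℤ))) := by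
        apply mul_nonneg (by omega) (by omega)
      have hident : (d i - d 0) * (u + (j : ℤ) - (i : ℤ)) - (u + v + (i : ℤ)) * (d j - d i)
          = (2*u + v + (j : ℤ)) * ((d i - d 0) - ((d j - d 0) - u - (j : ℤ) + i))
            + (u + (j : ℤ) - i) * ((d j - d 0) - (2*u + v + (j : ℤ))) := by ring
      linarith [T1, T2, hident]
    have hc1 : ((U + V + i : ℕ) : ℝ) = ((u + v + (i : ℤ) : ℤ) : ℝ) := by
      rw [hU, hV]; push_cast; ring
    have hc2 : ((U + j - i : ℕ) : ℝ) = ((u + (j : ℤ) - (i : ℤ) : ℤ) : ℝ) := by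
      have : (U + j - i : ℕ) = U + (j - i) := by omega
      rw [this, hU]; push_cast [Nat.cast_sub (by omega : i ≤ j)]; ring
    rw [hc1, hc2]
    calc ((u + v + (i:ℤ) : ℤ) : ℝ) * ((d j : ℝ) - (d i : ℝ))
        = (((u + v + (i:ℤ)) * (d j - d i) : ℤ) : ℝ) := by push_cast; ring
      _ ≤ (((d i - d 0) * (u + (j:ℤ) - (i:ℤ)) : ℤ) : ℝ) := by exact_mod_cast hZ
      _ = ((d i : ℝ) - (d 0 : ℝ)) * ((u + (j:ℤ) - (i:ℤ) : ℤ) : ℝ) := by push_cast; ring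
  have hboundR : ∀ i ∈ Finset.Icc (j+1) s,
      ((2*U + 2*V + i : ℕ) : ℝ) / ((V + i - j : ℕ) : ℝ)
        ≤ ((d i : ℝ) - (d 0 : ℝ)) / |(d i : ℝ) - (d j : ℝ)| := by
    intro i hi
    simp only [Finset.mem_Icc] at hi
    obtain ⟨hi1, hi2⟩ := hi
    have hyi : d i - d 0 ≤ β - ((s : ℤ) - (i : ℤ)) := by
      have := hmono2 s le_rfl i hi2; omega
    have hij : (i : ℤ) - (j : ℤ) ≤ d i - d j := by
      have := hmono2 i hi2 j (by omega); omega
    have hdij : (0 : ℤ) < d i - d j := by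
      have : (1 : ℤ) ≤ (i : ℤ) - (j : ℤ) := by
        have : j + 1 ≤ i := hi1
        exact_mod_cast (by omega : (1:ℤ) ≤ (i:ℤ) - (j:ℤ))
      omega
    have habs : |(d i : ℝ) - (d j : ℝ)| = (d i : ℝ) - (d j : ℝ) := by
      rw [abs_of_nonneg]
      have : (d j : ℝ) ≤ (d i : ℝ) := by exact_mod_cast (by omega : d j ≤ d i)
      linarith
    rw [habs]
    have hden1 : (0 : ℝ) < ((V + i - j : ℕ) : ℝ) := by
      have : 0 < V + i - j := by omega
      exact_mod_cast this
    have hden2 : (0 : ℝ) < (d i : ℝ) - (d j : ℝ) := by exact_mod_cast hdij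
    rw [div_le_div_iff₀ hden1 hden2]
    have hZ : (2*u + 2*v + (i : ℤ)) * (d i - d j) ≤ (d i - d 0) * (v + (i : ℤ) - (j : ℤ)) := by
      have T1 : (0 : ℤ) ≤ (2*u + v + (j : ℤ)) * (((d j - d 0) + v + (i:ℤ) - (j:ℤ)) - (d i - d 0)) := by
        apply mul_nonneg (by omega) (by omega)
      have T2 : (0 : ℤ) ≤ (v + (i : ℤ) - (j:ℤ)) * ((d j - d 0) - (2*u + v + (j : ℤ))) := by
        apply mul_nonneg (by omega) (by omega)
      have hident : (d i - d 0) * (v + (i : ℤ) - (j : ℤ)) - (2*u + 2*v + (i : ℤ)) * (d i - d j)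
          = (2*u + v + (j : ℤ)) * (((d j - d 0) + v + (i:ℤ) - (j:ℤ)) - (d i - d 0))
            + (v + (i : ℤ) - (j:ℤ)) * ((d j - d 0) - (2*u + v + (j : ℤ))) := by ring
      linarith [T1, T2, hident]
    have hc1 : ((2*U + 2*V + i : ℕ) : ℝ) = ((2*u + 2*v + (i : ℤ) : ℤ) : ℝ) := by
      rw [hU, hV]; push_cast; ring
    have hc2 : ((V + i - j : ℕ) : ℝ) = ((v + (i : ℤ) - (j : ℤ) : ℤ) : ℝ) := by
      have : (V + i - j : ℕ) = V + (i - j) := by omega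
      rw [this, hV]; push_cast [Nat.cast_sub (by omega : j ≤ i)]; ring
    rw [hc1, hc2]
    calc ((2*u + 2*v + (i:ℤ) : ℤ) : ℝ) * ((d i : ℝ) - (d j : ℝ))
        = (((2*u + 2*v + (i:ℤ)) * (d i - d j) : ℤ) : ℝ) := by push_cast; ring
      _ ≤ (((d i - d 0) * (v + (i:ℤ) - (j:ℤ)) : ℤ) : ℝ) := by exact_mod_cast hZ
      _ = ((d i : ℝ) - (d 0 : ℝ)) * ((v + (i:ℤ) - (j:ℤ) : ℤ) : ℝ) := by push_cast; ring
  -- assemble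
  have hProdL : (∏ i ∈ Finset.Ico 1 j, ((U + V + i : ℕ) : ℝ) / ((U + j - i : ℕ) : ℝ))
      ≤ ∏ i ∈ Finset.Ico 1 j, ((d i : ℝ) - (d 0 : ℝ)) / |(d i : ℝ) - (d j : ℝ)| := by
    apply Finset.prod_le_prod
    · intro i _; positivity
    · exact hboundL
  have hProdR : (∏ i ∈ Finset.Icc (j+1) s, ((2*U + 2*V + i : ℕ) : ℝ) / ((V + i - j : ℕ) : ℝ))
      ≤ ∏ i ∈ Finset.Icc (j+1) s, ((d i : ℝ) - (d 0 : ℝ)) / |(d i : ℝ) - (d j : ℝ)| := by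
    apply Finset.prod_le_prod
    · intro i _; positivity
    · exact hboundR
  have hchoose : (s.choose j : ℝ) ≤
      (∏ i ∈ Finset.Ico 1 j, ((U + V + i : ℕ) : ℝ) / ((U + j - i : ℕ) : ℝ)) *
      ∏ i ∈ Finset.Icc (j+1) s, ((2*U + 2*V + i : ℕ) : ℝ) / ((V + i - j : ℕ) : ℝ) := by
    rw [Finset.prod_div_distrib, Finset.prod_div_distrib, div_mul_div_comm]
    rw [le_div_iff₀ (by
      apply mul_pos <;> apply Finset.prod_pos <;> intro i hi
      · simp only [Finset.mem_Ico] at hi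
        have : 0 < U + j - i := by omega
        exact_mod_cast this
      · simp only [Finset.mem_Icc] at hi
        have : 0 < V + i - j := by omega
        exact_mod_cast this)]
    have := aux_nat s j U V hj hjs
    calc (s.choose j : ℝ) * ((∏ i ∈ Finset.Ico 1 j, ((U + j - i : ℕ) : ℝ)) *
            ∏ i ∈ Finset.Icc (j+1) s, ((V + i - j : ℕ) : ℝ))
        = ((s.choose j * ((∏ i ∈ Finset.Ico 1 j, (U + j - i)) *
            ∏ i ∈ Finset.Icc (j+1) s, (V + i - j)) : ℕ) : ℝ) := by
          push_cast; ring
      _ ≤ (((∏ i ∈ Finset.Ico 1 j, (U + V + i)) *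
            ∏ i ∈ Finset.Icc (j+1) s, (2*U + 2*V + i) : ℕ) : ℝ) := by
          exact_mod_cast this
      _ = (∏ i ∈ Finset.Ico 1 j, ((U + V + i : ℕ) : ℝ)) *
            ∏ i ∈ Finset.Icc (j+1) s, ((2*U + 2*V + i : ℕ) : ℝ) := by
          push_cast; ring
  refine le_trans hchoose (mul_le_mul hProdL hProdR ?_ ?_)
  · apply Finset.prod_nonneg; intro i _; positivity
  · exact le_trans (Finset.prod_nonneg fun i _ => by positivity) hProdL
end

section
/- Let n ≥ 1 and 1 ≤ j ≤ n be integers. Then for all t ∈ [0,1] and all x ≥ 0, c_j(t, x) ≥ binom(n, j). -/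
set_option maxHeartbeats 1000000

private lemma cfrak_prod_pos {m : ℕ} {c : ℝ} (hc : 0 ≤ c) :
    0 < ∏ i ∈ Finset.Icc 1 m, ((i : ℝ) + c) := by
  apply Finset.prod_pos
  intro i hi
  have h1 : 1 ≤ i := (Finset.mem_Icc.mp hi).1
  have h2 : (1 : ℝ) ≤ (i : ℝ) := by exact_mod_cast h1
  linarith

private lemma cfrak_prod_mono {m : ℕ} {t x : ℝ} (ht1 : t ≤ 1) (htx : 0 ≤ t * x)
    (hx : 0 ≤ x) :
    (∏ i ∈ Finset.Icc 1 m, ((i : ℝ) + t * x)) ≤ ∏ i ∈ Finset.Icc 1 m, ((i : ℝ) + x) := by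
  apply Finset.prod_le_prod
  · intro i hi; positivity
  · intro i hi; nlinarith [hx, ht1]

private lemma cfrak_base (a : ℕ) (t x : ℝ) (ht0 : 0 ≤ t) (ht1 : t ≤ 1) (hx : 0 ≤ x) :
    ((a + 1 + 0).choose (a + 1) : ℝ) *
        ((∏ i ∈ Finset.Icc 1 a, ((i : ℝ) + t * x)) *
          ∏ i ∈ Finset.Icc (1 : ℕ) 0, ((i : ℝ) + (1 - t) * x)) ≤
      (∏ i ∈ Finset.Icc 1 a, ((i : ℝ) + x)) *
        ∏ i ∈ Finset.Icc (a + 2) (a + 1 + 0), ((i : ℝ) + 2 * x) := by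
  have e1 : Finset.Icc (1 : ℕ) 0 = (∅ : Finset ℕ) := Finset.Icc_eq_empty (by omega)
  have e2 : Finset.Icc (a + 2) (a + 1 + 0) = (∅ : Finset ℕ) := Finset.Icc_eq_empty (by omega)
  rw [e1, e2]
  simp only [Finset.prod_empty, mul_one, Nat.add_zero, Nat.choose_self, Nat.cast_one, one_mul]
  exact cfrak_prod_mono ht1 (mul_nonneg ht0 hx) hx

private lemma cfrak_key (t x : ℝ) (ht0 : 0 ≤ t) (ht1 : t ≤ 1) (hx : 0 ≤ x) :
    ∀ s a b : ℕ, a + b = s →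
      ((a + 1 + b).choose (a + 1) : ℝ) *
          ((∏ i ∈ Finset.Icc 1 a, ((i : ℝ) + t * x)) *
            ∏ i ∈ Finset.Icc 1 b, ((i : ℝ) + (1 - t) * x)) ≤
        (∏ i ∈ Finset.Icc 1 a, ((i : ℝ) + x)) *
          ∏ i ∈ Finset.Icc (a + 2) (a + 1 + b), ((i : ℝ) + 2 * x) := by
  intro s
  induction s with
  | zero =>
    intro a b hab
    obtain rfl : b = 0 := by omega
    exact cfrak_base a t x ht0 ht1 hx
  | succ s ih =>
    intro a b hab
    rcases Nat.eq_zero_or_pos b with rfl | hbpos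
    · exact cfrak_base a t x ht0 ht1 hx
    obtain ⟨b', rfl⟩ : ∃ b', b = b' + 1 := ⟨b - 1, by omega⟩
    have hxt : 0 ≤ t * x := mul_nonneg ht0 hx
    have hxs : 0 ≤ (1 - t) * x := mul_nonneg (by linarith) hx
    by_cases hc : ((a : ℝ) + 1 + ((b' : ℝ) + 1)) * (1 - t) ≤ 2 * ((b' : ℝ) + 1)
    · -- Case A : reduce b
      have ihA := ih a b' (by omega)
      have e1 : a + 1 + (b' + 1) = a + 1 + b' + 1 := by omega
      rw [e1]
      rw [Finset.prod_Icc_succ_top (show 1 ≤ b' + 1 by omega)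
        (fun i => ((i : ℝ) + (1 - t) * x))]
      rw [Finset.prod_Icc_succ_top (show a + 2 ≤ a + 1 + b' + 1 by omega)
        (fun i => ((i : ℝ) + 2 * x))]
      have hCnn : (0 : ℝ) ≤ ((a + 1 + b' + 1).choose (a + 1) : ℝ) := by positivity
      have hC2nn : (0 : ℝ) ≤ ((a + 1 + b').choose (a + 1) : ℝ) := by positivity
      have hidN : (a + 1 + b').choose (a + 1) * (a + 1 + b' + 1) =
          (a + 1 + b' + 1).choose (a + 1) * (b' + 1) := by
        have h := Nat.choose_mul_succ_eq (a + 1 + b') (a + 1)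
        have hsub : a + 1 + b' + 1 - (a + 1) = b' + 1 := by omega
        rw [hsub] at h
        exact h
      have hid : ((a + 1 + b').choose (a + 1) : ℝ) * ((a : ℝ) + 1 + (b' : ℝ) + 1)
          = ((a + 1 + b' + 1).choose (a + 1) : ℝ) * ((b' : ℝ) + 1) := by
        exact_mod_cast hidN
      have h3 : ((a + 1 + b' + 1).choose (a + 1) : ℝ) * (1 - t)
          ≤ 2 * ((a + 1 + b').choose (a + 1) : ℝ) := by
        have hb : (0 : ℝ) < (b' : ℝ) + 1 := by positivity
        rw [← mul_le_mul_iff_left₀ hb]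
        nlinarith [mul_le_mul_of_nonneg_right hc hC2nn]
      have h1 : ((a + 1 + b' + 1).choose (a + 1) : ℝ) * (((b' : ℝ) + 1) + (1 - t) * x) ≤
          ((a + 1 + b').choose (a + 1) : ℝ) * (((a : ℝ) + 1 + (b' : ℝ) + 1) + 2 * x) := by
        nlinarith [mul_le_mul_of_nonneg_right h3 hx]
      have hPtQ : 0 ≤ (∏ i ∈ Finset.Icc 1 a, ((i : ℝ) + t * x)) *
          ∏ i ∈ Finset.Icc 1 b', ((i : ℝ) + (1 - t) * x) :=
        le_of_lt (mul_pos (cfrak_prod_pos hxt) (cfrak_prod_pos hxs))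
      have hF : (0 : ℝ) ≤ ((a : ℝ) + 1 + (b' : ℝ) + 1) + 2 * x := by positivity
      have m1 := mul_le_mul_of_nonneg_right h1 hPtQ
      have m2 := mul_le_mul_of_nonneg_left ihA hF
      push_cast
      push_cast at m1 m2
      nlinarith [m1, m2]
    · -- Case B : reduce a
      push_neg at hc
      have hc' : 2 * ((b' : ℝ) + 1) ≤ ((a : ℝ) + 1 + ((b' : ℝ) + 1)) * (1 - t) :=
        le_of_lt hc
      have ha1 : 1 ≤ a := by
        by_contra h
        have ha0 : a = 0 := by omega
        rw [ha0] at hc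
        push_cast at hc
        have hb0 : (0 : ℝ) ≤ (b' : ℝ) := Nat.cast_nonneg b'
        nlinarith [mul_le_mul_of_nonneg_left (show (1 : ℝ) - t ≤ 1 by linarith)
          (show (0 : ℝ) ≤ (b' : ℝ) + 2 by positivity)]
      obtain ⟨a', rfl⟩ : ∃ a', a = a' + 1 := ⟨a - 1, by omega⟩
      push_cast at hc'
      have ihB := ih a' (b' + 1) (by omega)
      have e5 : a' + 1 + (b' + 1) = a' + b' + 2 := by omega
      rw [e5] at ihB
      -- structural rewrites on the goal
      have e1 : a' + 1 + 1 + (b' + 1) = a' + b' + 3 := by omega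
      have e2 : a' + 1 + 2 = a' + 3 := by omega
      have e4 : a' + 1 + 1 = a' + 2 := by omega
      rw [e1, e2]
      rw [Finset.prod_Icc_succ_top (show 1 ≤ a' + 1 by omega)
        (fun i => ((i : ℝ) + t * x))]
      rw [Finset.prod_Icc_succ_top (show 1 ≤ a' + 1 by omega)
        (fun i => ((i : ℝ) + x))]
      rw [e4]
      -- product identity for the (i+2x) factors
      have hR : (((a' : ℝ) + 2) + 2 * x) *
            ∏ i ∈ Finset.Icc (a' + 3) (a' + b' + 3), ((i : ℝ) + 2 * x)
          = (∏ i ∈ Finset.Icc (a' + 2) (a' + b' + 2), ((i : ℝ) + 2 * x)) *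
            (((a' : ℝ) + (b' : ℝ) + 3) + 2 * x) := by
        have t1 : (∏ i ∈ Finset.Icc (a' + 2) (a' + b' + 3), ((i : ℝ) + 2 * x))
            = (((a' + 2 : ℕ) : ℝ) + 2 * x) *
              ∏ i ∈ Finset.Icc (a' + 3) (a' + b' + 3), ((i : ℝ) + 2 * x) := by
          rw [← Finset.Ico_add_one_right_eq_Icc, ← Finset.Ico_add_one_right_eq_Icc,
            Finset.prod_eq_prod_Ico_succ_bot (show a' + 2 < a' + b' + 3 + 1 by omega)]
        have t2 : (∏ i ∈ Finset.Icc (a' + 2) (a' + b' + 2 + 1), ((i : ℝ) + 2 * x))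
            = (∏ i ∈ Finset.Icc (a' + 2) (a' + b' + 2), ((i : ℝ) + 2 * x)) *
              (((a' + b' + 2 + 1 : ℕ) : ℝ) + 2 * x) :=
          Finset.prod_Icc_succ_top (by omega) _
        have e3 : a' + b' + 2 + 1 = a' + b' + 3 := by omega
        rw [e3] at t2
        rw [t1] at t2
        push_cast at t2
        linear_combination t2
      -- binomial identity: (a'+2) * C(a'+b'+3, a'+2) = (a'+b'+3) * C(a'+b'+2, a'+1)
      have hidN : (a' + b' + 3) * (a' + b' + 2).choose (a' + 1)
          = (a' + b' + 3).choose (a' + 2) * (a' + 2) := by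
        have h := Nat.add_one_mul_choose_eq (a' + b' + 2) (a' + 1)
        have e6 : a' + b' + 2 + 1 = a' + b' + 3 := by omega
        have e7 : a' + 1 + 1 = a' + 2 := by omega
        rw [e6, e7] at h
        exact h
      have hid : ((a' : ℝ) + (b' : ℝ) + 3) * ((a' + b' + 2).choose (a' + 1) : ℝ)
          = ((a' + b' + 3).choose (a' + 2) : ℝ) * ((a' : ℝ) + 2) := by
        exact_mod_cast hidN
      have hCnn : (0 : ℝ) ≤ ((a' + b' + 3).choose (a' + 2) : ℝ) := by positivity
      have hC2nn : (0 : ℝ) ≤ ((a' + b' + 2).choose (a' + 1) : ℝ) := by positivity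
      -- the key polynomial inequality
      have hpoly : ((a' : ℝ) + (b' : ℝ) + 3) * ((((a' : ℝ) + 1) + t * x) * (((a' : ℝ) + 2) + 2 * x))
          ≤ ((a' : ℝ) + 2) * ((((a' : ℝ) + 1) + x) * (((a' : ℝ) + (b' : ℝ) + 3) + 2 * x)) := by
        have F2 : ((b' : ℝ) + 1) ≤ ((a' : ℝ) + 2) - ((a' : ℝ) + (b' : ℝ) + 3) * t := by
          nlinarith [hc']
        have F1 : 2 * ((a' : ℝ) + 1) * ((b' : ℝ) + 1)
            ≤ ((a' : ℝ) + 2) * (((a' : ℝ) + (b' : ℝ) + 3) * (1 - t)) := by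
          nlinarith [mul_le_mul_of_nonneg_left hc' (show (0 : ℝ) ≤ (a' : ℝ) + 2 by positivity)]
        nlinarith [mul_le_mul_of_nonneg_right F1 hx,
          mul_le_mul_of_nonneg_right F2 (mul_nonneg hx hx),
          mul_nonneg (mul_nonneg hx hx) (show (0 : ℝ) ≤ (b' : ℝ) + 1 by positivity)]
      -- scalar inequality with the binomial constants, multiplied by (a'+2)
      have hnum : ((a' : ℝ) + 2) * (((a' + b' + 3).choose (a' + 2) : ℝ) *
            ((((a' : ℝ) + 1) + t * x) * (((a' : ℝ) + 2) + 2 * x)))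
          ≤ ((a' : ℝ) + 2) * (((a' + b' + 2).choose (a' + 1) : ℝ) *
            ((((a' : ℝ) + 1) + x) * (((a' : ℝ) + (b' : ℝ) + 3) + 2 * x))) := by
        have hid2 : ((a' : ℝ) + 2) * (((a' + b' + 3).choose (a' + 2) : ℝ) *
              ((((a' : ℝ) + 1) + t * x) * (((a' : ℝ) + 2) + 2 * x)))
            = (((a' : ℝ) + (b' : ℝ) + 3) * ((a' + b' + 2).choose (a' + 1) : ℝ)) *
              ((((a' : ℝ) + 1) + t * x) * (((a' : ℝ) + 2) + 2 * x)) := by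
          rw [hid]; ring
        rw [hid2]
        nlinarith [mul_le_mul_of_nonneg_left hpoly hC2nn]
      -- assemble
      have hPtQ : 0 ≤ (∏ i ∈ Finset.Icc 1 a', ((i : ℝ) + t * x)) *
          ∏ i ∈ Finset.Icc 1 (b' + 1), ((i : ℝ) + (1 - t) * x) :=
        le_of_lt (mul_pos (cfrak_prod_pos hxt) (cfrak_prod_pos hxs))
      have hPxnn : (0 : ℝ) ≤ ∏ i ∈ Finset.Icc 1 a', ((i : ℝ) + x) :=
        le_of_lt (cfrak_prod_pos hx)
      have hδ : (0 : ℝ) ≤ ((a' : ℝ) + 2) * ((((a' : ℝ) + 1) + x) *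
          (((a' : ℝ) + (b' : ℝ) + 3) + 2 * x)) := by positivity
      have m1 := mul_le_mul_of_nonneg_right hnum hPtQ
      have m2 := mul_le_mul_of_nonneg_left ihB hδ
      have hR2 : (((a' : ℝ) + 2) * ((((a' : ℝ) + 1) + x) *
              ∏ i ∈ Finset.Icc 1 a', ((i : ℝ) + x))) *
            ((((a' : ℝ) + 2) + 2 * x) *
              ∏ i ∈ Finset.Icc (a' + 3) (a' + b' + 3), ((i : ℝ) + 2 * x))
          = (((a' : ℝ) + 2) * ((((a' : ℝ) + 1) + x) *
              ∏ i ∈ Finset.Icc 1 a', ((i : ℝ) + x))) *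
            ((∏ i ∈ Finset.Icc (a' + 2) (a' + b' + 2), ((i : ℝ) + 2 * x)) *
              (((a' : ℝ) + (b' : ℝ) + 3) + 2 * x)) := by
        rw [hR]
      have hγ : (0 : ℝ) < ((a' : ℝ) + 2) * (((a' : ℝ) + 2) + 2 * x) := by positivity
      refine le_of_mul_le_mul_left ?_ hγ
      push_cast
      push_cast at m1 m2 hR2
      nlinarith [m1, m2, hR2]

/-- The function `c_j(t, x) = (∏_{i=1}^{j−1} (i + x) · ∏_{i=j+1}^{n} (i + 2x)) /
(∏_{i=1}^{j−1} (i + t·x) · ∏_{i=1}^{n−j} (i + (1−t)·x))`. -/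
noncomputable def cfrak (n j : ℕ) (t x : ℝ) : ℝ :=
  ((∏ i ∈ Finset.Icc 1 (j - 1), ((i : ℝ) + x)) *
      ∏ i ∈ Finset.Icc (j + 1) n, ((i : ℝ) + 2 * x)) /
    ((∏ i ∈ Finset.Icc 1 (j - 1), ((i : ℝ) + t * x)) *
      ∏ i ∈ Finset.Icc 1 (n - j), ((i : ℝ) + (1 - t) * x))

/-- For all `t ∈ [0,1]` and `x ≥ 0`, one has `c_j(t, x) ≥ C(n, j)`. -/
theorem cfrak_ge_choose (n j : ℕ) (hn : 1 ≤ n) (hj : 1 ≤ j) (hjn : j ≤ n)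
    (t x : ℝ) (ht0 : 0 ≤ t) (ht1 : t ≤ 1) (hx : 0 ≤ x) :
    (n.choose j : ℝ) ≤ cfrak n j t x := by
  obtain ⟨a, rfl⟩ : ∃ a, j = a + 1 := ⟨j - 1, by omega⟩
  obtain ⟨b, rfl⟩ : ∃ b, n = a + 1 + b := ⟨n - (a + 1), by omega⟩
  unfold cfrak
  have e1 : a + 1 - 1 = a := by omega
  have e2 : a + 1 + b - (a + 1) = b := by omega
  have e3 : a + 1 + 1 = a + 2 := by omega
  rw [e1, e2, e3]
  have hxt : 0 ≤ t * x := mul_nonneg ht0 hx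
  have hxs : 0 ≤ (1 - t) * x := mul_nonneg (by linarith) hx
  have hD : 0 < (∏ i ∈ Finset.Icc 1 a, ((i : ℝ) + t * x)) *
      ∏ i ∈ Finset.Icc 1 b, ((i : ℝ) + (1 - t) * x) :=
    mul_pos (cfrak_prod_pos hxt) (cfrak_prod_pos hxs)
  rw [le_div_iff₀ hD]
  exact cfrak_key t x ht0 ht1 hx (a + b) a b rfl
end

section
/- Let n ≥ 1 and 1 ≤ j ≤ n be integers and fix t ∈ [0,1]. Then the function x ↦ c_j(t, x) is nondecreasing on [0, ∞); equivalently, the partial derivative ∂c_j/∂x(t, x) is nonnegative for all (t, x) ∈ [0,1] × [0,∞). -/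
open Multiset

private lemma pair_ineq {p1 p2 q1 q2 x y : ℝ} (h : q2 * p1 ≤ p2 * q1) (hx : 0 ≤ x)
    (hxy : x ≤ y) :
    (p1 + p2 * x) * (q1 + q2 * y) ≤ (p1 + p2 * y) * (q1 + q2 * x) := by
  nlinarith [mul_le_mul_of_nonneg_left h (sub_nonneg.2 hxy)]

/-- The key combinatorial lemma: if the "capacity counting" condition holds between two
families of linear factors, then the cross-multiplied product inequality holds. -/
private lemma key : ∀ (N : ℕ) (P Q : Multiset (ℝ × ℝ)),
    Multiset.card P = N → Multiset.card Q = N →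
    (∀ p ∈ P, 0 < p.1 ∧ 0 < p.2) → (∀ q ∈ Q, 0 < q.1 ∧ 0 ≤ q.2) →
    (∀ u : ℝ, 0 ≤ u → Q.countP (fun q => q.1 ≤ q.2 * u) ≤ P.countP (fun p => p.1 ≤ p.2 * u)) →
    ∀ x y : ℝ, 0 ≤ x → x ≤ y →
    (P.map (fun p => p.1 + p.2 * x)).prod * (Q.map (fun q => q.1 + q.2 * y)).prod ≤
    (P.map (fun p => p.1 + p.2 * y)).prod * (Q.map (fun q => q.1 + q.2 * x)).prod := by
  intro N
  induction N with
  | zero =>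
    intro P Q hPc hQc _ _ _ x y _ _
    rw [Multiset.card_eq_zero] at hPc hQc
    subst hPc; subst hQc; simp
  | succ N ih =>
    intro P Q hPc hQc hPm hQm hcount x y hx hxy
    have hy : 0 ≤ y := le_trans hx hxy
    have hPne : P.toFinset.Nonempty := by
      rw [Multiset.toFinset_nonempty]
      intro h; rw [h] at hPc; simp at hPc
    obtain ⟨pm, hpmP', hpmax0⟩ := Finset.exists_max_image P.toFinset (fun p => p.1 / p.2) hPne
    rw [Multiset.mem_toFinset] at hpmP'
    have hpmax : ∀ p ∈ P, p.1 * pm.2 ≤ pm.1 * p.2 := by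
      intro p hp
      have h1 := hpmax0 p (Multiset.mem_toFinset.2 hp)
      have hp2 := (hPm p hp).2
      have hpm2 := (hPm pm hpmP').2
      rw [div_le_div_iff₀ hp2 hpm2] at h1
      exact h1
    have hQne : Q.toFinset.Nonempty := by
      rw [Multiset.toFinset_nonempty]
      intro h; rw [h] at hQc; simp at hQc
    obtain ⟨qm, hqmQ', hqmax0⟩ := Finset.exists_max_image Q.toFinset
      (fun q => if q.2 = 0 then (⊤ : EReal) else ((q.1 / q.2 : ℝ) : EReal)) hQne
    rw [Multiset.mem_toFinset] at hqmQ'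
    have hqmax : ∀ q ∈ Q, q.1 * qm.2 ≤ qm.1 * q.2 := by
      intro q hq
      have h1 := hqmax0 q (Multiset.mem_toFinset.2 hq)
      by_cases h2 : qm.2 = 0
      · rw [h2, mul_zero]
        exact mul_nonneg (hQm qm hqmQ').1.le (hQm q hq).2
      · have hqm2 : 0 < qm.2 := lt_of_le_of_ne (hQm qm hqmQ').2 (Ne.symm h2)
        by_cases h3 : q.2 = 0
        · exfalso
          simp only [h3, if_pos, h2, if_neg, not_false_iff] at h1
          exact (EReal.coe_lt_top _).not_ge h1
        · have hq2 : 0 < q.2 := lt_of_le_of_ne (hQm q hq).2 (Ne.symm h3)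
          simp only [h2, h3, if_neg, not_false_iff, EReal.coe_le_coe_iff] at h1
          rw [div_le_div_iff₀ hq2 hqm2] at h1
          exact h1
    have hkey : qm.2 * pm.1 ≤ pm.2 * qm.1 := by
      by_contra hcon
      push_neg at hcon
      have hq2 : 0 < qm.2 := by
        rcases lt_or_eq_of_le (hQm qm hqmQ').2 with h | h
        · exact h
        · exfalso
          rw [← h, zero_mul] at hcon
          exact (mul_pos (hPm pm hpmP').2 (hQm qm hqmQ').1).not_gt hcon
      set u := qm.1 / qm.2 with hu_def
      have hu : 0 ≤ u := div_nonneg (hQm qm hqmQ').1.le hq2.le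
      have hQall : ∀ q ∈ Q, q.1 ≤ q.2 * u := by
        intro q hq
        rw [hu_def, mul_div_assoc', le_div_iff₀ hq2]
        linarith [hqmax q hq]
      have hpm_not : ¬ (pm.1 ≤ pm.2 * u) := by
        intro h
        rw [hu_def, mul_div_assoc', le_div_iff₀ hq2] at h
        linarith
      obtain ⟨P', hP'⟩ := Multiset.exists_cons_of_mem hpmP'
      have h1 := hcount u hu
      rw [Multiset.countP_eq_card.2 hQall, hQc] at h1
      rw [hP', Multiset.countP_cons, if_neg hpm_not] at h1
      have h2 := Multiset.countP_le_card (fun p => p.1 ≤ p.2 * u) P'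
      have h3 : Multiset.card P' = N := by
        rw [hP'] at hPc; simp at hPc; exact hPc
      omega
    obtain ⟨P', hP'⟩ := Multiset.exists_cons_of_mem hpmP'
    obtain ⟨Q', hQ'⟩ := Multiset.exists_cons_of_mem hqmQ'
    subst hP'; subst hQ'
    have hpm1 := (hPm pm (Multiset.mem_cons_self _ _)).1
    have hpm2 := (hPm pm (Multiset.mem_cons_self _ _)).2
    have hqm1 := (hQm qm (Multiset.mem_cons_self _ _)).1
    have hqm2 := (hQm qm (Multiset.mem_cons_self _ _)).2
    have hP'm : ∀ p ∈ P', 0 < p.1 ∧ 0 < p.2 := fun p hp => hPm p (Multiset.mem_cons_of_mem hp)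
    have hQ'm : ∀ q ∈ Q', 0 < q.1 ∧ 0 ≤ q.2 := fun q hq => hQm q (Multiset.mem_cons_of_mem hq)
    have hP'c : Multiset.card P' = N := by simp at hPc; exact hPc
    have hQ'c : Multiset.card Q' = N := by simp at hQc; exact hQc
    have hcount' : ∀ u : ℝ, 0 ≤ u →
        Q'.countP (fun q => q.1 ≤ q.2 * u) ≤ P'.countP (fun p => p.1 ≤ p.2 * u) := by
      intro u hu
      have h0 := hcount u hu
      rw [Multiset.countP_cons, Multiset.countP_cons] at h0
      have hQ'le := Multiset.countP_le_card (fun q => q.1 ≤ q.2 * u) Q'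
      by_cases hq : qm.1 ≤ qm.2 * u
      · have hq2 : 0 < qm.2 := by
          rcases lt_or_eq_of_le hqm2 with h | h
          · exact h
          · exfalso; rw [← h, zero_mul] at hq; linarith
        have hpm : pm.1 ≤ pm.2 * u := by
          nlinarith [mul_le_mul_of_nonneg_left hq hpm2.le]
        have hPall : ∀ p ∈ P', p.1 ≤ p.2 * u := by
          intro p hp
          have h1 := hpmax p (Multiset.mem_cons_of_mem hp)
          have hp2 := (hP'm p hp).2
          nlinarith [mul_le_mul_of_nonneg_right hpm hp2.le]
        rw [Multiset.countP_eq_card.2 hPall, hP'c]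
        omega
      · by_cases hp : pm.1 ≤ pm.2 * u
        · have hPall : ∀ p ∈ P', p.1 ≤ p.2 * u := by
            intro p hp'
            have h1 := hpmax p (Multiset.mem_cons_of_mem hp')
            have hp2 := (hP'm p hp').2
            nlinarith [mul_le_mul_of_nonneg_right hp hp2.le]
          rw [Multiset.countP_eq_card.2 hPall, hP'c]
          omega
        · rw [if_neg hq, if_neg hp] at h0
          omega
    have ihle := ih P' Q' hP'c hQ'c hP'm hQ'm hcount' x y hx hxy
    simp only [Multiset.map_cons, Multiset.prod_cons]
    have hpair := pair_ineq hkey hx hxy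
    have hfacts : ∀ z : ℝ, 0 ≤ z → 0 ≤ (P'.map (fun p => p.1 + p.2 * z)).prod := by
      intro z hz
      apply Multiset.prod_nonneg
      intro a ha
      obtain ⟨p, hp, rfl⟩ := Multiset.mem_map.1 ha
      have := hP'm p hp
      nlinarith [this.1, this.2]
    have hfactsQ : ∀ z : ℝ, 0 ≤ z → 0 ≤ (Q'.map (fun q => q.1 + q.2 * z)).prod := by
      intro z hz
      apply Multiset.prod_nonneg
      intro a ha
      obtain ⟨q, hq, rfl⟩ := Multiset.mem_map.1 ha
      have := hQ'm q hq
      nlinarith [this.1, this.2]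
    calc (pm.1 + pm.2 * x) * (P'.map (fun p => p.1 + p.2 * x)).prod *
          ((qm.1 + qm.2 * y) * (Q'.map (fun q => q.1 + q.2 * y)).prod)
        = ((pm.1 + pm.2 * x) * (qm.1 + qm.2 * y)) *
          ((P'.map (fun p => p.1 + p.2 * x)).prod * (Q'.map (fun q => q.1 + q.2 * y)).prod) := by
          ring
      _ ≤ ((pm.1 + pm.2 * y) * (qm.1 + qm.2 * x)) *
          ((P'.map (fun p => p.1 + p.2 * y)).prod * (Q'.map (fun q => q.1 + q.2 * x)).prod) := by
          apply mul_le_mul hpair ihle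
          · exact mul_nonneg (hfacts x hx) (hfactsQ y hy)
          · have h1 : (0:ℝ) ≤ pm.1 + pm.2 * y := by nlinarith
            have h2 : (0:ℝ) ≤ qm.1 + qm.2 * x := by nlinarith
            exact mul_nonneg h1 h2
      _ = (pm.1 + pm.2 * y) * (P'.map (fun p => p.1 + p.2 * y)).prod *
          ((qm.1 + qm.2 * x) * (Q'.map (fun q => q.1 + q.2 * x)).prod) := by
          ring

private lemma card_filter_Icc (a b : ℕ) (ha : 1 ≤ a) (v : ℝ) :
    Multiset.card (Multiset.filter (fun i : ℕ => (i : ℝ) ≤ v) (Finset.Icc a b).val)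
      = min b ⌊v⌋₊ + 1 - a := by
  rw [← Finset.filter_val, ← Finset.card_def]
  have : (Finset.Icc a b).filter (fun i : ℕ => (i : ℝ) ≤ v) = Finset.Icc a (min b ⌊v⌋₊) := by
    ext i
    simp only [Finset.mem_filter, Finset.mem_Icc, le_min_iff]
    constructor
    · rintro ⟨⟨h1, h2⟩, h3⟩
      have hv : 0 ≤ v := le_trans (by positivity) h3
      exact ⟨h1, h2, (Nat.le_floor_iff hv).2 h3⟩
    · rintro ⟨h1, h2, h3⟩
      refine ⟨⟨h1, h2⟩, ?_⟩
      rcases le_or_gt 0 v with hv | hv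
      · exact le_trans (Nat.cast_le.2 h3) (Nat.floor_le hv)
      · exfalso
        rw [Nat.floor_eq_zero.2 (lt_of_lt_of_le hv zero_le_one)] at h3
        omega
  rw [this, Nat.card_Icc]

private lemma floor_superadd {a b : ℝ} (ha : 0 ≤ a) (hb : 0 ≤ b) :
    ⌊a⌋₊ + ⌊b⌋₊ ≤ ⌊a + b⌋₊ := by
  rw [Nat.le_floor_iff (by linarith)]
  push_cast
  exact add_le_add (Nat.floor_le ha) (Nat.floor_le hb)

/-- For fixed `t ∈ [0,1]`, the function `x ↦ c_j(t, x)` is nondecreasing on `[0, ∞)`. -/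
theorem cfrak_monotoneOn (n j : ℕ) (hn : 1 ≤ n) (hj : 1 ≤ j) (hjn : j ≤ n)
    (t : ℝ) (ht0 : 0 ≤ t) (ht1 : t ≤ 1) :
    MonotoneOn (fun x => cfrak n j t x) (Set.Ici (0 : ℝ)) := by
  intro x hx y hy hxy
  simp only [Set.mem_Ici] at hx hy
  simp only [cfrak]
  set P : Multiset (ℝ × ℝ) :=
      ((Finset.Icc 1 (j-1)).val.map (fun i : ℕ => ((i:ℝ), (1:ℝ)))) +
      ((Finset.Icc (j+1) n).val.map (fun i : ℕ => ((i:ℝ), (2:ℝ)))) with hPdef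
  set Q : Multiset (ℝ × ℝ) :=
      ((Finset.Icc 1 (j-1)).val.map (fun i : ℕ => ((i:ℝ), t))) +
      ((Finset.Icc 1 (n-j)).val.map (fun i : ℕ => ((i:ℝ), 1-t))) with hQdef
  have hPc : Multiset.card P = (j-1) + (n-j) := by
    simp [hPdef, Nat.card_Icc]
  have hQc : Multiset.card Q = (j-1) + (n-j) := by
    simp [hQdef, Nat.card_Icc]
  have hPm : ∀ p ∈ P, 0 < p.1 ∧ 0 < p.2 := by
    intro p hp
    simp only [hPdef, Multiset.mem_add, Multiset.mem_map, Finset.mem_val, Finset.mem_Icc] at hp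
    rcases hp with ⟨i, hi, rfl⟩ | ⟨i, hi, rfl⟩
    · refine ⟨?_, by norm_num⟩
      show (0:ℝ) < (i:ℝ)
      exact_mod_cast Nat.lt_of_lt_of_le Nat.zero_lt_one hi.1
    · refine ⟨?_, by norm_num⟩
      show (0:ℝ) < (i:ℝ)
      exact_mod_cast Nat.lt_of_lt_of_le (Nat.zero_lt_succ j) hi.1
  have hQm : ∀ q ∈ Q, 0 < q.1 ∧ 0 ≤ q.2 := by
    intro q hq
    simp only [hQdef, Multiset.mem_add, Multiset.mem_map, Finset.mem_val, Finset.mem_Icc] at hq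
    rcases hq with ⟨i, hi, rfl⟩ | ⟨i, hi, rfl⟩
    · refine ⟨?_, ht0⟩
      show (0:ℝ) < (i:ℝ)
      exact_mod_cast Nat.lt_of_lt_of_le Nat.zero_lt_one hi.1
    · refine ⟨?_, show (0:ℝ) ≤ 1 - t by linarith⟩
      show (0:ℝ) < (i:ℝ)
      exact_mod_cast Nat.lt_of_lt_of_le Nat.zero_lt_one hi.1
  have hcount : ∀ u : ℝ, 0 ≤ u →
      Q.countP (fun q => q.1 ≤ q.2 * u) ≤ P.countP (fun p => p.1 ≤ p.2 * u) := by
    intro u hu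
    simp only [hPdef, hQdef, Multiset.countP_add, Multiset.countP_map]
    have e1 : ∀ (c : ℝ) (a b : ℕ), 1 ≤ a →
        Multiset.card (Multiset.filter
          (fun i : ℕ => ((fun q : ℝ × ℝ => q.1 ≤ q.2 * u) ((i:ℝ), c))) (Finset.Icc a b).val)
          = min b ⌊c*u⌋₊ + 1 - a := by
      intro c a b ha
      simp only []
      exact card_filter_Icc a b ha (c*u)
    rw [e1 t 1 (j-1) le_rfl, e1 (1-t) 1 (n-j) le_rfl, e1 1 1 (j-1) le_rfl,
      e1 2 (j+1) n (by omega)]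
    rw [one_mul]
    have h1 : ⌊t*u⌋₊ + ⌊(1-t)*u⌋₊ ≤ ⌊u⌋₊ := by
      have := floor_superadd (a := t*u) (b := (1-t)*u) (mul_nonneg ht0 hu)
        (mul_nonneg (by linarith) hu)
      rw [show t*u + (1-t)*u = u by ring] at this
      exact this
    have h2 : ⌊(1-t)*u⌋₊ + ⌊u⌋₊ ≤ ⌊2*u⌋₊ := by
      have h3 := floor_superadd (a := (1-t)*u) (b := u)
        (mul_nonneg (by linarith : (0:ℝ) ≤ 1-t) hu) hu
      refine le_trans h3 (Nat.floor_le_floor ?_)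
      nlinarith
    omega
  have hprodP : ∀ z : ℝ, (P.map (fun p => p.1 + p.2 * z)).prod =
      (∏ i ∈ Finset.Icc 1 (j-1), ((i:ℝ) + z)) * ∏ i ∈ Finset.Icc (j+1) n, ((i:ℝ) + 2*z) := by
    intro z
    rw [hPdef, Multiset.map_add, Multiset.prod_add, Multiset.map_map, Multiset.map_map]
    rw [Finset.prod_eq_multiset_prod, Finset.prod_eq_multiset_prod]
    simp [Function.comp]
  have hprodQ : ∀ z : ℝ, (Q.map (fun q => q.1 + q.2 * z)).prod =
      (∏ i ∈ Finset.Icc 1 (j-1), ((i:ℝ) + t*z)) *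
        ∏ i ∈ Finset.Icc 1 (n-j), ((i:ℝ) + (1-t)*z) := by
    intro z
    rw [hQdef, Multiset.map_add, Multiset.prod_add, Multiset.map_map, Multiset.map_map]
    rw [Finset.prod_eq_multiset_prod, Finset.prod_eq_multiset_prod]
    simp [Function.comp]
  have hpos : ∀ z : ℝ, 0 ≤ z → 0 < (∏ i ∈ Finset.Icc 1 (j-1), ((i:ℝ) + t*z)) *
      ∏ i ∈ Finset.Icc 1 (n-j), ((i:ℝ) + (1-t)*z) := by
    intro z hz
    apply mul_pos <;>
      (apply Finset.prod_pos; intro i hi; rw [Finset.mem_Icc] at hi;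
       have h1 : (1:ℝ) ≤ (i:ℝ) := by exact_mod_cast hi.1)
    · nlinarith [mul_nonneg ht0 hz]
    · nlinarith [mul_nonneg (show (0:ℝ) ≤ 1-t by linarith) hz]
  rw [div_le_div_iff₀ (hpos x hx) (hpos y hy)]
  rw [← hprodP x, ← hprodP y, ← hprodQ x, ← hprodQ y]
  exact key ((j-1) + (n-j)) P Q hPc hQc hPm hQm hcount x y hx hxy
end
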